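/- arXiv:1008.3716 — 2 statements merged into one kernel-verified Lean document; each statement's English description precedes it below -/
import Mathlib

section
/- Let y_F be the linear chain with nearest-neighbor spacing Fε, let f ∈ 𝒰, and let u^a ∈ 𝒰 satisfy δE^a(y_F)[v] + δ²E^a(y_F)[u^a, v] = ⟨f, v⟩ for all v ∈ 𝒰. Then for every v ∈ 𝒰, | δE^CB(y_F)[v] + δ²E^CB(y_F)[u^a, v] − ⟨f, v⟩ | ≤ ε² max{ |φ''(2F)|, |φ'(2F)/(2F)| } ‖(u^a)'''‖_{ℓ²_ε} ‖v'‖_{ℓ²_ε}. -/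
noncomputable section

open Real Finset

/-- Euclidean norm on `ℝ × ℝ`. -/
def enorm2 (v : ℝ × ℝ) : ℝ := Real.sqrt (v.1 ^ 2 + v.2 ^ 2)

/-- Euclidean dot product on `ℝ × ℝ`. -/
def edot (v w : ℝ × ℝ) : ℝ := v.1 * w.1 + v.2 * w.2

/-- `N`-periodic mean-zero displacements (the space `𝒰`). -/
def IsDisp (N : ℕ) (u : ℤ → ℝ × ℝ) : Prop :=
  (∀ ℓ : ℤ, u (ℓ + (N : ℤ)) = u ℓ) ∧ ∑ ℓ ∈ Finset.Icc (1 : ℤ) (N : ℤ), u ℓ = 0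

/-- Constrained displacements (the space `𝒰̃`): second component vanishes. -/
def IsDisp1D (N : ℕ) (u : ℤ → ℝ × ℝ) : Prop :=
  IsDisp N u ∧ ∀ ℓ : ℤ, (u ℓ).2 = 0

/-- Backward difference `u'_ℓ = (u_ℓ - u_{ℓ-1})/ε`. -/
def bd (ε : ℝ) (u : ℤ → ℝ × ℝ) (ℓ : ℤ) : ℝ × ℝ := ε⁻¹ • (u ℓ - u (ℓ - 1))

/-- The inner product `⟨v,w⟩ = ε ∑_{ℓ=1}^N v_ℓ · w_ℓ`. -/
def ip (N : ℕ) (ε : ℝ) (v w : ℤ → ℝ × ℝ) : ℝ :=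
  ε * ∑ ℓ ∈ Finset.Icc (1 : ℤ) (N : ℤ), edot (v ℓ) (w ℓ)

/-- The norm `‖v‖_{ℓ²_ε}`. -/
def nrm (N : ℕ) (ε : ℝ) (v : ℤ → ℝ × ℝ) : ℝ :=
  Real.sqrt (ε * ∑ ℓ ∈ Finset.Icc (1 : ℤ) (N : ℤ), (enorm2 (v ℓ)) ^ 2)

/-- The atomistic energy `E^a`. -/
def Ea (N : ℕ) (ε : ℝ) (φ : ℝ → ℝ) (y : ℤ → ℝ × ℝ) : ℝ :=
  ε * ∑ ℓ ∈ Finset.Icc (1 : ℤ) (N : ℤ),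
    (φ (enorm2 (bd ε y ℓ)) + φ (enorm2 (bd ε y (ℓ + 1) + bd ε y ℓ)))

/-- The Cauchy–Born energy `E^CB`. -/
def ECB (N : ℕ) (ε : ℝ) (φ : ℝ → ℝ) (y : ℤ → ℝ × ℝ) : ℝ :=
  ε * ∑ ℓ ∈ Finset.Icc (1 : ℤ) (N : ℤ),
    (φ (enorm2 (bd ε y ℓ)) + φ (2 * enorm2 (bd ε y ℓ)))

/-- The bond-angle energy `E^b`. -/
def Eb (N : ℕ) (ε α : ℝ) (y : ℤ → ℝ × ℝ) : ℝ :=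
  ε * ∑ ℓ ∈ Finset.Icc (1 : ℤ) (N : ℤ),
    α * (1 - edot (bd ε y (ℓ + 1)) (bd ε y ℓ) /
      (enorm2 (bd ε y (ℓ + 1)) * enorm2 (bd ε y ℓ)))

/-- The quasi-nonlocal energy `E^QNL`. -/
def EQNL (N K : ℕ) (ε : ℝ) (φ : ℝ → ℝ) (y : ℤ → ℝ × ℝ) : ℝ :=
  ε * ∑ ℓ ∈ Finset.Icc (1 : ℤ) (N : ℤ), φ (enorm2 (bd ε y ℓ))
  + ε * ∑ ℓ ∈ Finset.Icc (1 : ℤ) (K : ℤ), φ (enorm2 (bd ε y (ℓ + 1) + bd ε y ℓ))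
  + ε * ∑ ℓ ∈ Finset.Icc ((K : ℤ) + 2) (N : ℤ), φ (2 * enorm2 (bd ε y ℓ))
  + ε / 2 * φ (2 * enorm2 (bd ε y 1)) + ε / 2 * φ (2 * enorm2 (bd ε y ((K : ℤ) + 1)))

/-- First variation `δE(y)[u] = (d/dt) E(y + t u) |_{t=0}`. -/
def dE (E : (ℤ → ℝ × ℝ) → ℝ) (y u : ℤ → ℝ × ℝ) : ℝ :=
  deriv (fun t : ℝ => E (fun ℓ => y ℓ + t • u ℓ)) 0

/-- Second variation `δ²E(y)[u,v] = (∂²/∂t∂s) E(y + t u + s v) |_{t=s=0}`. -/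
def d2E (E : (ℤ → ℝ × ℝ) → ℝ) (y u v : ℤ → ℝ × ℝ) : ℝ :=
  deriv (fun s : ℝ => deriv (fun t : ℝ => E (fun ℓ => y ℓ + t • u ℓ + s • v ℓ)) 0) 0

/-- The linear chain `y_{F,ℓ} = (Fεℓ, 0)`. -/
def yLin (ε F : ℝ) : ℤ → ℝ × ℝ := fun ℓ => (F * ε * ℓ, 0)

/-- The uniform circular chain of radius `R = Fε/(2 sin(πε))`. -/
def yCirc (ε F : ℝ) : ℤ → ℝ × ℝ := fun ℓ =>
  (F * ε / (2 * Real.sin (π * ε)) * Real.cos (2 * π * ε * ℓ),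
   F * ε / (2 * Real.sin (π * ε)) * Real.sin (2 * π * ε * ℓ))

def bondD (φ : ℝ → ℝ) (c : ℝ) (p a : ℝ × ℝ) : ℝ :=
  deriv φ (c * enorm2 p) * (c * (edot p a / enorm2 p))

lemma master0 {φ : ℝ → ℝ} (hφ : ContDiffOn ℝ 2 φ (Set.Ioi 0)) {c : ℝ} (hc : 0 < c)
    (p a : ℝ × ℝ) (hp : 0 < enorm2 p) :
    HasDerivAt (fun t : ℝ => φ (c * enorm2 (p + t • a))) (bondD φ c p a) 0 := by
  have hq : 0 < p.1 ^ 2 + p.2 ^ 2 := by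
    have := hp; rw [enorm2, Real.sqrt_pos] at this; exact this
  have hn : (0:ℝ) < Real.sqrt (p.1 ^ 2 + p.2 ^ 2) := Real.sqrt_pos.2 hq
  have hx : HasDerivAt (fun t : ℝ => (p.1 + t * a.1) ^ 2 + (p.2 + t * a.2) ^ 2)
      (2 * p.1 * a.1 + 2 * p.2 * a.2) 0 := by
    have h1 : HasDerivAt (fun t : ℝ => p.1 + t * a.1) a.1 0 :=
      (hasDerivAt_mul_const a.1).const_add p.1
    have h2 : HasDerivAt (fun t : ℝ => p.2 + t * a.2) a.2 0 :=
      (hasDerivAt_mul_const a.2).const_add p.2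
    have h := ((h1.fun_pow 2).fun_add (h2.fun_pow 2))
    refine h.congr_deriv ?_
    norm_num
  have hg : HasDerivAt (fun t : ℝ => c * Real.sqrt ((p.1 + t * a.1) ^ 2 + (p.2 + t * a.2) ^ 2))
      (c * ((2 * p.1 * a.1 + 2 * p.2 * a.2) / (2 * Real.sqrt (p.1 ^ 2 + p.2 ^ 2)))) 0 := by
    have h := (hx.sqrt (by norm_num; exact hq.ne')).const_mul c
    simpa using h
  have hφ' : HasDerivAt φ (deriv φ (c * Real.sqrt (p.1 ^ 2 + p.2 ^ 2)))
      (c * Real.sqrt (p.1 ^ 2 + p.2 ^ 2)) := by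
    have hmem : c * Real.sqrt (p.1 ^ 2 + p.2 ^ 2) ∈ Set.Ioi (0:ℝ) := by
      simp [Set.mem_Ioi]; positivity
    exact ((hφ.contDiffAt (isOpen_Ioi.mem_nhds hmem)).differentiableAt (by norm_num)).hasDerivAt
  have hpt : c * Real.sqrt (p.1 ^ 2 + p.2 ^ 2)
      = c * Real.sqrt ((p.1 + (0:ℝ) * a.1) ^ 2 + (p.2 + (0:ℝ) * a.2) ^ 2) := by norm_num
  rw [hpt] at hφ'
  have H := hφ'.comp 0 hg
  rw [← hpt] at H
  have funeq : (fun t : ℝ => φ (c * enorm2 (p + t • a)))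
      = fun t : ℝ => φ (c * Real.sqrt ((p.1 + t * a.1) ^ 2 + (p.2 + t * a.2) ^ 2)) := by
    funext t
    simp [enorm2, Prod.fst_add, Prod.snd_add, Prod.smul_fst, Prod.smul_snd, smul_eq_mul]
  rw [funeq]
  refine H.congr_deriv ?_
  rw [bondD, enorm2, edot]
  field_simp

lemma master2 {φ : ℝ → ℝ} (hφ : ContDiffOn ℝ 2 φ (Set.Ioi 0)) {c R : ℝ} (hc : 0 < c)
    (hR : 0 < R) (a b : ℝ × ℝ) :
    HasDerivAt (fun s : ℝ => bondD φ c (((R:ℝ), (0:ℝ)) + s • b) a)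
      (c ^ 2 * deriv (deriv φ) (c * R) * (a.1 * b.1) + c * deriv φ (c * R) * (a.2 * b.2) / R) 0 := by
  have hx2 : HasDerivAt (fun s : ℝ => (R + s * b.1) ^ 2 + (s * b.2) ^ 2) (2 * R * b.1) 0 := by
    have h1 : HasDerivAt (fun s : ℝ => R + s * b.1) b.1 0 :=
      (hasDerivAt_mul_const b.1).const_add R
    have h2 : HasDerivAt (fun s : ℝ => s * b.2) b.2 0 := hasDerivAt_mul_const b.2
    have h := (h1.fun_pow 2).fun_add (h2.fun_pow 2)
    refine h.congr_deriv ?_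
    norm_num
  have hNder : HasDerivAt (fun s : ℝ => Real.sqrt ((R + s * b.1) ^ 2 + (s * b.2) ^ 2)) b.1 0 := by
    have h := hx2.sqrt (by norm_num; positivity)
    convert h using 1
    rw [show (R + (0:ℝ) * b.1) ^ 2 + ((0:ℝ) * b.2) ^ 2 = R ^ 2 by norm_num,
      Real.sqrt_sq hR.le]
    field_simp
  have hcN : HasDerivAt (fun s : ℝ => c * Real.sqrt ((R + s * b.1) ^ 2 + (s * b.2) ^ 2))
      (c * b.1) 0 := hNder.const_mul c
  have hdφ : HasDerivAt (deriv φ) (deriv (deriv φ) (c * R)) (c * R) := by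
    have h1 : ContDiffOn ℝ 1 (deriv φ) (Set.Ioi 0) := hφ.deriv_of_isOpen isOpen_Ioi (by norm_num)
    have hmem : c * R ∈ Set.Ioi (0:ℝ) := by simp [Set.mem_Ioi]; positivity
    exact ((h1.contDiffAt (isOpen_Ioi.mem_nhds hmem)).differentiableAt (by norm_num)).hasDerivAt
  have hpt : c * R = c * Real.sqrt ((R + (0:ℝ) * b.1) ^ 2 + ((0:ℝ) * b.2) ^ 2) := by
    rw [show (R + (0:ℝ) * b.1) ^ 2 + ((0:ℝ) * b.2) ^ 2 = R ^ 2 by norm_num, Real.sqrt_sq hR.le]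
  rw [hpt] at hdφ
  have hD := hdφ.comp 0 hcN
  rw [← hpt] at hD
  have hE : HasDerivAt (fun s : ℝ => ((R + s * b.1) * a.1 + (s * b.2) * a.2))
      (b.1 * a.1 + b.2 * a.2) 0 := by
    have h1 : HasDerivAt (fun s : ℝ => (R + s * b.1) * a.1) (b.1 * a.1) 0 :=
      ((hasDerivAt_mul_const b.1).const_add R).mul_const a.1
    have h2 : HasDerivAt (fun s : ℝ => (s * b.2) * a.2) (b.2 * a.2) 0 :=
      (hasDerivAt_mul_const b.2).mul_const a.2
    exact h1.add h2
  have hQ := hE.div hNder (by norm_num; positivity)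
  have hP := hD.fun_mul (hQ.const_mul c)
  have funeq : (fun s : ℝ => bondD φ c (((R:ℝ), (0:ℝ)) + s • b) a)
      = fun s : ℝ => (deriv φ (c * Real.sqrt ((R + s * b.1) ^ 2 + (s * b.2) ^ 2))) *
        (c * (((R + s * b.1) * a.1 + (s * b.2) * a.2) /
          Real.sqrt ((R + s * b.1) ^ 2 + (s * b.2) ^ 2))) := by
    funext s
    simp [bondD, enorm2, edot, Prod.fst_add, Prod.snd_add, Prod.smul_fst, Prod.smul_snd,
      smul_eq_mul]
  rw [funeq]
  refine hP.congr_deriv ?_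
  rw [show (R + (0:ℝ) * b.1) ^ 2 + ((0:ℝ) * b.2) ^ 2 = R ^ 2 by norm_num, Real.sqrt_sq hR.le]
  norm_num
  field_simp
  simp only [Real.sqrt_sq hR.le]
  ring

lemma bd_add_smul (ε t : ℝ) (y u : ℤ → ℝ × ℝ) (ℓ : ℤ) :
    bd ε (fun m => y m + t • u m) ℓ = bd ε y ℓ + t • bd ε u ℓ := by
  simp only [bd]; module

lemma bd_yLin {ε : ℝ} (hε : ε ≠ 0) (F : ℝ) (ℓ : ℤ) :
    bd ε (yLin ε F) ℓ = ((F : ℝ), (0 : ℝ)) := by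
  simp only [bd, yLin]
  have : (F * ε * ℓ, (0:ℝ)) - (F * ε * (ℓ - 1 : ℤ), (0:ℝ)) = (F * ε, (0:ℝ)) := by
    rw [Prod.mk_sub_mk]
    push_cast
    norm_num
    ring
  rw [this, Prod.smul_mk]
  rw [smul_eq_mul, smul_eq_mul]
  field_simp
  simp

-- periodicity is preserved by bd
lemma bd_periodic {ε : ℝ} {N : ℕ} {u : ℤ → ℝ × ℝ} (hu : ∀ ℓ : ℤ, u (ℓ + (N:ℤ)) = u ℓ) :
    ∀ ℓ : ℤ, bd ε u (ℓ + (N:ℤ)) = bd ε u ℓ := by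
  intro ℓ
  simp only [bd]
  rw [show ℓ + (N:ℤ) - 1 = (ℓ - 1) + (N:ℤ) by ring, hu, hu]

-- shift of a periodic sum
lemma sum_shift {N : ℕ} (hN : 1 ≤ (N:ℤ)) (g : ℤ → ℝ) (hg : ∀ ℓ : ℤ, g (ℓ + (N:ℤ)) = g ℓ) :
    ∑ ℓ ∈ Finset.Icc (1:ℤ) (N:ℤ), g (ℓ + 1) = ∑ ℓ ∈ Finset.Icc (1:ℤ) (N:ℤ), g ℓ := by
  have h1 : ∑ ℓ ∈ Finset.Icc (1:ℤ) (N:ℤ), g (ℓ + 1)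
      = ∑ ℓ ∈ Finset.Icc (2:ℤ) ((N:ℤ) + 1), g ℓ := by
    apply Finset.sum_nbij' (fun ℓ => ℓ + 1) (fun ℓ => ℓ - 1) <;>
      intros <;> simp_all [Finset.mem_Icc] <;> omega
  have h2 : Finset.Icc (1:ℤ) ((N:ℤ) + 1) = insert 1 (Finset.Icc (2:ℤ) ((N:ℤ)+1)) := by
    ext x; simp [Finset.mem_Icc]; omega
  have h3 : Finset.Icc (1:ℤ) ((N:ℤ) + 1) = insert ((N:ℤ)+1) (Finset.Icc (1:ℤ) (N:ℤ)) := by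
    ext x; simp [Finset.mem_Icc]; omega
  have h4 : ∑ ℓ ∈ Finset.Icc (1:ℤ) ((N:ℤ)+1), g ℓ
      = g 1 + ∑ ℓ ∈ Finset.Icc (2:ℤ) ((N:ℤ)+1), g ℓ := by
    rw [h2, Finset.sum_insert (by simp [Finset.mem_Icc])]
  have h5 : ∑ ℓ ∈ Finset.Icc (1:ℤ) ((N:ℤ)+1), g ℓ
      = g ((N:ℤ)+1) + ∑ ℓ ∈ Finset.Icc (1:ℤ) (N:ℤ), g ℓ := by
    rw [h3, Finset.sum_insert (by simp [Finset.mem_Icc])]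
  have h6 : g ((N:ℤ)+1) = g 1 := by rw [show (N:ℤ)+1 = 1 + (N:ℤ) by ring, hg]
  rw [h1]
  linarith [h4, h5]

lemma sum_shift' {N : ℕ} (hN : 1 ≤ (N:ℤ)) (g : ℤ → ℝ) (hg : ∀ ℓ : ℤ, g (ℓ + (N:ℤ)) = g ℓ) :
    ∑ ℓ ∈ Finset.Icc (1:ℤ) (N:ℤ), g (ℓ - 1) = ∑ ℓ ∈ Finset.Icc (1:ℤ) (N:ℤ), g ℓ := by
  have := sum_shift hN (fun ℓ => g (ℓ - 1)) (fun ℓ => by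
    show g (ℓ + (N:ℤ) - 1) = g (ℓ - 1)
    rw [show ℓ + (N:ℤ) - 1 = (ℓ - 1) + (N:ℤ) by ring, hg])
  simp only [add_sub_cancel_right] at this
  rw [← this]

def d1 (ε : ℝ) (p : ℤ → ℝ) (ℓ : ℤ) : ℝ := ε⁻¹ * (p ℓ - p (ℓ - 1))

lemma d1_periodic {ε : ℝ} {N : ℕ} {p : ℤ → ℝ} (hp : ∀ ℓ : ℤ, p (ℓ + (N:ℤ)) = p ℓ) :
    ∀ ℓ : ℤ, d1 ε p (ℓ + (N:ℤ)) = d1 ε p ℓ := by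
  intro ℓ
  simp only [d1]
  rw [show ℓ + (N:ℤ) - 1 = (ℓ - 1) + (N:ℤ) by ring, hp, hp]

lemma scalar_id {N : ℕ} (hN : 1 ≤ (N:ℤ)) {ε : ℝ} (hε : ε ≠ 0) (p q : ℤ → ℝ)
    (hp : ∀ ℓ : ℤ, p (ℓ + (N:ℤ)) = p ℓ) (hq : ∀ ℓ : ℤ, q (ℓ + (N:ℤ)) = q ℓ) :
    ∑ ℓ ∈ Finset.Icc (1:ℤ) (N:ℤ),
        (4 * p ℓ * q ℓ - (p (ℓ+1) + p ℓ) * (q (ℓ+1) + q ℓ))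
      = -ε^2 * ∑ ℓ ∈ Finset.Icc (1:ℤ) (N:ℤ), d1 ε (d1 ε p) (ℓ+1) * q ℓ := by
  have hpq : ∀ ℓ : ℤ, p (ℓ + (N:ℤ)) * q (ℓ + (N:ℤ)) = p ℓ * q ℓ := fun ℓ => by rw [hp, hq]
  -- step 1
  have step1 : ∑ ℓ ∈ Finset.Icc (1:ℤ) (N:ℤ),
      (4 * p ℓ * q ℓ - (p (ℓ+1) + p ℓ) * (q (ℓ+1) + q ℓ))
      = ∑ ℓ ∈ Finset.Icc (1:ℤ) (N:ℤ), (p (ℓ+1) - p ℓ) * (q (ℓ+1) - q ℓ) := by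
    have e : ∀ ℓ ∈ Finset.Icc (1:ℤ) (N:ℤ),
        4 * p ℓ * q ℓ - (p (ℓ+1) + p ℓ) * (q (ℓ+1) + q ℓ)
        = (p (ℓ+1) - p ℓ) * (q (ℓ+1) - q ℓ) + (2 * (p ℓ * q ℓ) - 2 * (p (ℓ+1) * q (ℓ+1))) := by
      intro ℓ _; ring
    rw [Finset.sum_congr rfl e, Finset.sum_add_distrib]
    have : ∑ ℓ ∈ Finset.Icc (1:ℤ) (N:ℤ), (2 * (p ℓ * q ℓ) - 2 * (p (ℓ+1) * q (ℓ+1))) = 0 := by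
      rw [Finset.sum_sub_distrib, ← Finset.mul_sum, ← Finset.mul_sum,
        sum_shift hN (fun ℓ => p ℓ * q ℓ) hpq]
      ring
    rw [this, add_zero]
  -- step 2
  have step2 : ∑ ℓ ∈ Finset.Icc (1:ℤ) (N:ℤ), (p (ℓ+1) - p ℓ) * (q (ℓ+1) - q ℓ)
      = ε^2 * ∑ ℓ ∈ Finset.Icc (1:ℤ) (N:ℤ), d1 ε p ℓ * d1 ε q ℓ := by
    have e : ∀ ℓ ∈ Finset.Icc (1:ℤ) (N:ℤ),
        (p (ℓ+1) - p ℓ) * (q (ℓ+1) - q ℓ) = ε^2 * (d1 ε p (ℓ+1) * d1 ε q (ℓ+1)) := by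
      intro ℓ _
      simp only [d1, add_sub_cancel_right]
      field_simp
    rw [Finset.sum_congr rfl e, ← Finset.mul_sum,
      sum_shift hN (fun ℓ => d1 ε p ℓ * d1 ε q ℓ)
        (fun ℓ => by
          show d1 ε p (ℓ + (N:ℤ)) * d1 ε q (ℓ + (N:ℤ)) = d1 ε p ℓ * d1 ε q ℓ
          rw [d1_periodic hp, d1_periodic hq])]
  -- step 3
  have step3 : ∑ ℓ ∈ Finset.Icc (1:ℤ) (N:ℤ), d1 ε p ℓ * d1 ε q ℓ
      = -∑ ℓ ∈ Finset.Icc (1:ℤ) (N:ℤ), d1 ε (d1 ε p) (ℓ+1) * q ℓ := by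
    have e : ∀ ℓ ∈ Finset.Icc (1:ℤ) (N:ℤ),
        d1 ε p ℓ * d1 ε q ℓ = ε⁻¹ * (d1 ε p ℓ * q ℓ) - ε⁻¹ * (d1 ε p ℓ * q (ℓ-1)) := by
      intro ℓ _
      simp only [d1]
      ring
    rw [Finset.sum_congr rfl e, Finset.sum_sub_distrib, ← Finset.mul_sum, ← Finset.mul_sum]
    have hshift : ∑ ℓ ∈ Finset.Icc (1:ℤ) (N:ℤ), d1 ε p ℓ * q (ℓ-1)
        = ∑ ℓ ∈ Finset.Icc (1:ℤ) (N:ℤ), d1 ε p (ℓ+1) * q ℓ := by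
      have := sum_shift' hN (fun m => d1 ε p (m+1) * q m)
        (fun m => by
          show d1 ε p (m + (N:ℤ) + 1) * q (m + (N:ℤ)) = d1 ε p (m + 1) * q m
          rw [show m + (N:ℤ) + 1 = (m + 1) + (N:ℤ) by ring, d1_periodic hp, hq])
      rw [← this]
      apply Finset.sum_congr rfl
      intro ℓ _
      show d1 ε p ℓ * q (ℓ - 1) = d1 ε p (ℓ - 1 + 1) * q (ℓ - 1)
      rw [show ℓ - 1 + 1 = ℓ by ring]
    rw [hshift]
    have e2 : ∀ ℓ ∈ Finset.Icc (1:ℤ) (N:ℤ),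
        d1 ε p ℓ * q ℓ - d1 ε p (ℓ+1) * q ℓ = -(ε * (d1 ε (d1 ε p) (ℓ+1) * q ℓ)) := by
      intro ℓ _
      simp only [d1, add_sub_cancel_right]
      field_simp
      ring
    have key : ∑ ℓ ∈ Finset.Icc (1:ℤ) (N:ℤ), d1 ε p ℓ * q ℓ
        - ∑ ℓ ∈ Finset.Icc (1:ℤ) (N:ℤ), d1 ε p (ℓ+1) * q ℓ
        = -(ε * ∑ ℓ ∈ Finset.Icc (1:ℤ) (N:ℤ), d1 ε (d1 ε p) (ℓ+1) * q ℓ) := by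
      rw [← Finset.sum_sub_distrib, Finset.sum_congr rfl e2]
      rw [Finset.sum_neg_distrib, ← Finset.mul_sum]
    rw [← mul_sub, key]
    field_simp
  rw [step1, step2, step3]
  ring


lemma master0_one {φ : ℝ → ℝ} (hφ : ContDiffOn ℝ 2 φ (Set.Ioi 0))
    (p a : ℝ × ℝ) (hp : 0 < enorm2 p) :
    HasDerivAt (fun t : ℝ => φ (enorm2 (p + t • a))) (bondD φ 1 p a) 0 := by
  have h := master0 hφ one_pos p a hp
  simpa using h

lemma enorm2_R0 {R : ℝ} (hR : 0 ≤ R) : enorm2 ((R, 0) : ℝ × ℝ) = R := by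
  simp [enorm2, Real.sqrt_sq hR]

lemma bondD_eval {φ : ℝ → ℝ} {c R : ℝ} (hc : 0 < c) (hR : 0 < R) (a : ℝ × ℝ) :
    bondD φ c ((R, 0) : ℝ × ℝ) a = c * deriv φ (c * R) * a.1 := by
  rw [bondD, enorm2_R0 hR.le, edot]
  field_simp
  ring

lemma hasDerivAt_Ea {φ : ℝ → ℝ} (hφ : ContDiffOn ℝ 2 φ (Set.Ioi 0)) {N : ℕ} {ε : ℝ}
    (yb u : ℤ → ℝ × ℝ)
    (h1 : ∀ ℓ ∈ Finset.Icc (1:ℤ) (N:ℤ), 0 < enorm2 (bd ε yb ℓ))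
    (h2 : ∀ ℓ ∈ Finset.Icc (1:ℤ) (N:ℤ), 0 < enorm2 (bd ε yb (ℓ+1) + bd ε yb ℓ)) :
    HasDerivAt (fun t : ℝ => Ea N ε φ (fun m => yb m + t • u m))
      (ε * ∑ ℓ ∈ Finset.Icc (1:ℤ) (N:ℤ), (bondD φ 1 (bd ε yb ℓ) (bd ε u ℓ)
        + bondD φ 1 (bd ε yb (ℓ+1) + bd ε yb ℓ) (bd ε u (ℓ+1) + bd ε u ℓ))) 0 := by
  have funeq : (fun t : ℝ => Ea N ε φ (fun m => yb m + t • u m)) = fun t : ℝ =>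
      ε * ∑ ℓ ∈ Finset.Icc (1:ℤ) (N:ℤ), (φ (enorm2 (bd ε yb ℓ + t • bd ε u ℓ))
        + φ (enorm2 ((bd ε yb (ℓ+1) + bd ε yb ℓ) + t • (bd ε u (ℓ+1) + bd ε u ℓ)))) := by
    funext t
    simp only [Ea]
    congr 1
    apply Finset.sum_congr rfl
    intro ℓ _
    rw [bd_add_smul, bd_add_smul,
      show (bd ε yb (ℓ+1) + t • bd ε u (ℓ+1)) + (bd ε yb ℓ + t • bd ε u ℓ)
        = (bd ε yb (ℓ+1) + bd ε yb ℓ) + t • (bd ε u (ℓ+1) + bd ε u ℓ) from by module]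
  rw [funeq]
  refine HasDerivAt.const_mul ε (HasDerivAt.fun_sum ?_)
  intro ℓ hℓ
  exact (master0_one hφ _ _ (h1 ℓ hℓ)).add (master0_one hφ _ _ (h2 ℓ hℓ))

lemma hasDerivAt_ECB {φ : ℝ → ℝ} (hφ : ContDiffOn ℝ 2 φ (Set.Ioi 0)) {N : ℕ} {ε : ℝ}
    (yb u : ℤ → ℝ × ℝ)
    (h1 : ∀ ℓ ∈ Finset.Icc (1:ℤ) (N:ℤ), 0 < enorm2 (bd ε yb ℓ)) :
    HasDerivAt (fun t : ℝ => ECB N ε φ (fun m => yb m + t • u m))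
      (ε * ∑ ℓ ∈ Finset.Icc (1:ℤ) (N:ℤ), (bondD φ 1 (bd ε yb ℓ) (bd ε u ℓ)
        + bondD φ 2 (bd ε yb ℓ) (bd ε u ℓ))) 0 := by
  have funeq : (fun t : ℝ => ECB N ε φ (fun m => yb m + t • u m)) = fun t : ℝ =>
      ε * ∑ ℓ ∈ Finset.Icc (1:ℤ) (N:ℤ), (φ (enorm2 (bd ε yb ℓ + t • bd ε u ℓ))
        + φ (2 * enorm2 (bd ε yb ℓ + t • bd ε u ℓ))) := by
    funext t
    simp only [ECB]
    congr 1
    apply Finset.sum_congr rfl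
    intro ℓ _
    rw [bd_add_smul]
  rw [funeq]
  refine HasDerivAt.const_mul ε (HasDerivAt.fun_sum ?_)
  intro ℓ hℓ
  exact (master0_one hφ _ _ (h1 ℓ hℓ)).add (master0 hφ two_pos _ _ (h1 ℓ hℓ))

lemma pair2F (F : ℝ) : ((2*F, 0) : ℝ × ℝ) = ((F,0) : ℝ × ℝ) + ((F,0) : ℝ × ℝ) := by
  rw [Prod.mk_add_mk]; norm_num [two_mul]

lemma dEa_eval {φ : ℝ → ℝ} (hφ : ContDiffOn ℝ 2 φ (Set.Ioi 0)) {N : ℕ} {ε F : ℝ}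
    (hε : ε ≠ 0) (hF : 0 < F) (v : ℤ → ℝ × ℝ) :
    dE (Ea N ε φ) (yLin ε F) v = ε * ∑ ℓ ∈ Finset.Icc (1:ℤ) (N:ℤ),
      (deriv φ F * (bd ε v ℓ).1 + deriv φ (2*F) * ((bd ε v (ℓ+1)).1 + (bd ε v ℓ).1)) := by
  have h2F : (0:ℝ) < 2*F := by positivity
  have h1 : ∀ ℓ ∈ Finset.Icc (1:ℤ) (N:ℤ), 0 < enorm2 (bd ε (yLin ε F) ℓ) := by
    intro ℓ _; rw [bd_yLin hε, enorm2_R0 hF.le]; exact hF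
  have h2 : ∀ ℓ ∈ Finset.Icc (1:ℤ) (N:ℤ),
      0 < enorm2 (bd ε (yLin ε F) (ℓ+1) + bd ε (yLin ε F) ℓ) := by
    intro ℓ _; rw [bd_yLin hε, bd_yLin hε, ← pair2F, enorm2_R0 h2F.le]; exact h2F
  rw [dE, (hasDerivAt_Ea hφ (yLin ε F) v h1 h2).deriv]
  congr 1
  apply Finset.sum_congr rfl
  intro ℓ _
  simp only [bd_yLin hε]
  rw [← pair2F, bondD_eval one_pos hF, bondD_eval one_pos h2F]
  simp [Prod.fst_add]

lemma dECB_eval {φ : ℝ → ℝ} (hφ : ContDiffOn ℝ 2 φ (Set.Ioi 0)) {N : ℕ} {ε F : ℝ}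
    (hε : ε ≠ 0) (hF : 0 < F) (v : ℤ → ℝ × ℝ) :
    dE (ECB N ε φ) (yLin ε F) v = ε * ∑ ℓ ∈ Finset.Icc (1:ℤ) (N:ℤ),
      (deriv φ F * (bd ε v ℓ).1 + 2 * deriv φ (2*F) * (bd ε v ℓ).1) := by
  have h1 : ∀ ℓ ∈ Finset.Icc (1:ℤ) (N:ℤ), 0 < enorm2 (bd ε (yLin ε F) ℓ) := by
    intro ℓ _; rw [bd_yLin hε, enorm2_R0 hF.le]; exact hF
  rw [dE, (hasDerivAt_ECB hφ (yLin ε F) v h1).deriv]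
  congr 1
  apply Finset.sum_congr rfl
  intro ℓ _
  rw [bd_yLin hε, bondD_eval one_pos hF, bondD_eval two_pos hF]
  ring_nf

lemma ev_pos {R : ℝ} (hR : 0 < R) (b : ℝ × ℝ) :
    ∀ᶠ s : ℝ in nhds 0, 0 < enorm2 (((R,0) : ℝ × ℝ) + s • b) := by
  have heq : ∀ s : ℝ, enorm2 (((R,0) : ℝ × ℝ) + s • b)
      = Real.sqrt ((R + s * b.1)^2 + (s * b.2)^2) := by
    intro s
    simp [enorm2, Prod.fst_add, Prod.snd_add, Prod.smul_fst, Prod.smul_snd, smul_eq_mul]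
  have hcont : Continuous fun s : ℝ => enorm2 (((R,0) : ℝ × ℝ) + s • b) := by
    simp only [heq]
    exact Real.continuous_sqrt.comp (by continuity)
  have h0 : (0:ℝ) ∈ {s : ℝ | 0 < enorm2 (((R,0) : ℝ × ℝ) + s • b)} := by
    simp only [Set.mem_setOf_eq, heq]
    norm_num
    positivity
  exact (isOpen_lt continuous_const hcont).mem_nhds h0

lemma d2Ea_eval {φ : ℝ → ℝ} (hφ : ContDiffOn ℝ 2 φ (Set.Ioi 0)) {N : ℕ} {ε F : ℝ}
    (hε : ε ≠ 0) (hF : 0 < F) (u v : ℤ → ℝ × ℝ) :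
    d2E (Ea N ε φ) (yLin ε F) u v = ε * ∑ ℓ ∈ Finset.Icc (1:ℤ) (N:ℤ),
      (deriv (deriv φ) F * ((bd ε u ℓ).1 * (bd ε v ℓ).1)
        + deriv φ F * ((bd ε u ℓ).2 * (bd ε v ℓ).2) / F
        + (deriv (deriv φ) (2*F) *
            ((bd ε u (ℓ+1) + bd ε u ℓ).1 * (bd ε v (ℓ+1) + bd ε v ℓ).1)
          + deriv φ (2*F) *
            ((bd ε u (ℓ+1) + bd ε u ℓ).2 * (bd ε v (ℓ+1) + bd ε v ℓ).2) / (2*F))) := by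
  have h2F : (0:ℝ) < 2*F := by positivity
  set z := bd ε v with hzdef
  have hev1 : ∀ᶠ s : ℝ in nhds 0, ∀ ℓ ∈ Finset.Icc (1:ℤ) (N:ℤ),
      0 < enorm2 (((F,0) : ℝ × ℝ) + s • z ℓ) := by
    rw [Filter.eventually_all_finset]; intro ℓ _; exact ev_pos hF (z ℓ)
  have hev2 : ∀ᶠ s : ℝ in nhds 0, ∀ ℓ ∈ Finset.Icc (1:ℤ) (N:ℤ),
      0 < enorm2 (((2*F,0) : ℝ × ℝ) + s • (z (ℓ+1) + z ℓ)) := by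
    rw [Filter.eventually_all_finset]; intro ℓ _; exact ev_pos h2F (z (ℓ+1) + z ℓ)
  have hEv : (fun s : ℝ =>
        deriv (fun t : ℝ => Ea N ε φ (fun ℓ => yLin ε F ℓ + t • u ℓ + s • v ℓ)) 0)
      =ᶠ[nhds 0] (fun s : ℝ => ε * ∑ ℓ ∈ Finset.Icc (1:ℤ) (N:ℤ),
        (bondD φ 1 (((F,0) : ℝ × ℝ) + s • z ℓ) (bd ε u ℓ)
          + bondD φ 1 (((2*F,0) : ℝ × ℝ) + s • (z (ℓ+1) + z ℓ))
            (bd ε u (ℓ+1) + bd ε u ℓ))) := by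
    filter_upwards [hev1, hev2] with s hs1 hs2
    have hyb : ∀ ℓ : ℤ, bd ε (fun m => yLin ε F m + s • v m) ℓ = ((F,0) : ℝ × ℝ) + s • z ℓ :=
      fun ℓ => by rw [bd_add_smul, bd_yLin hε]
    have funeq : (fun t : ℝ => Ea N ε φ (fun ℓ => yLin ε F ℓ + t • u ℓ + s • v ℓ))
        = (fun t : ℝ => Ea N ε φ (fun m => (yLin ε F m + s • v m) + t • u m)) := by
      funext t; congr 1; funext ℓ; rw [add_right_comm]
    have hcomb : ∀ ℓ : ℤ, bd ε (fun m => yLin ε F m + s • v m) (ℓ+1)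
        + bd ε (fun m => yLin ε F m + s • v m) ℓ
        = ((2*F,0) : ℝ × ℝ) + s • (z (ℓ+1) + z ℓ) := by
      intro ℓ; rw [hyb, hyb, pair2F]; module
    have hpos1 : ∀ ℓ ∈ Finset.Icc (1:ℤ) (N:ℤ),
        0 < enorm2 (bd ε (fun m => yLin ε F m + s • v m) ℓ) := by
      intro ℓ hℓ; rw [hyb]; exact hs1 ℓ hℓ
    have hpos2 : ∀ ℓ ∈ Finset.Icc (1:ℤ) (N:ℤ),
        0 < enorm2 (bd ε (fun m => yLin ε F m + s • v m) (ℓ+1)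
          + bd ε (fun m => yLin ε F m + s • v m) ℓ) := by
      intro ℓ hℓ; rw [hcomb]; exact hs2 ℓ hℓ
    rw [funeq, (hasDerivAt_Ea hφ (fun m => yLin ε F m + s • v m) u hpos1 hpos2).deriv]
    congr 1
    apply Finset.sum_congr rfl
    intro ℓ _
    rw [hcomb, hyb]
  rw [d2E, hEv.deriv_eq]
  have H2 : HasDerivAt (fun s : ℝ => ε * ∑ ℓ ∈ Finset.Icc (1:ℤ) (N:ℤ),
      (bondD φ 1 (((F,0) : ℝ × ℝ) + s • z ℓ) (bd ε u ℓ)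
        + bondD φ 1 (((2*F,0) : ℝ × ℝ) + s • (z (ℓ+1) + z ℓ)) (bd ε u (ℓ+1) + bd ε u ℓ)))
      (ε * ∑ ℓ ∈ Finset.Icc (1:ℤ) (N:ℤ),
        (((1:ℝ)^2 * deriv (deriv φ) (1*F) * ((bd ε u ℓ).1 * (z ℓ).1)
          + 1 * deriv φ (1*F) * ((bd ε u ℓ).2 * (z ℓ).2) / F)
        + ((1:ℝ)^2 * deriv (deriv φ) (1*(2*F)) *
            ((bd ε u (ℓ+1) + bd ε u ℓ).1 * (z (ℓ+1) + z ℓ).1)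
          + 1 * deriv φ (1*(2*F)) *
            ((bd ε u (ℓ+1) + bd ε u ℓ).2 * (z (ℓ+1) + z ℓ).2) / (2*F)))) 0 := by
    refine HasDerivAt.const_mul ε (HasDerivAt.fun_sum ?_)
    intro ℓ _
    exact (master2 hφ one_pos hF (bd ε u ℓ) (z ℓ)).add
      (master2 hφ one_pos h2F (bd ε u (ℓ+1) + bd ε u ℓ) (z (ℓ+1) + z ℓ))
  rw [H2.deriv]
  congr 1
  apply Finset.sum_congr rfl
  intro ℓ _
  simp only [one_pow, one_mul, Prod.fst_add, Prod.snd_add]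

lemma d2ECB_eval {φ : ℝ → ℝ} (hφ : ContDiffOn ℝ 2 φ (Set.Ioi 0)) {N : ℕ} {ε F : ℝ}
    (hε : ε ≠ 0) (hF : 0 < F) (u v : ℤ → ℝ × ℝ) :
    d2E (ECB N ε φ) (yLin ε F) u v = ε * ∑ ℓ ∈ Finset.Icc (1:ℤ) (N:ℤ),
      (deriv (deriv φ) F * ((bd ε u ℓ).1 * (bd ε v ℓ).1)
        + deriv φ F * ((bd ε u ℓ).2 * (bd ε v ℓ).2) / F
        + (2^2 * deriv (deriv φ) (2*F) * ((bd ε u ℓ).1 * (bd ε v ℓ).1)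
          + 2 * deriv φ (2*F) * ((bd ε u ℓ).2 * (bd ε v ℓ).2) / F)) := by
  set z := bd ε v with hzdef
  have hev1 : ∀ᶠ s : ℝ in nhds 0, ∀ ℓ ∈ Finset.Icc (1:ℤ) (N:ℤ),
      0 < enorm2 (((F,0) : ℝ × ℝ) + s • z ℓ) := by
    rw [Filter.eventually_all_finset]; intro ℓ _; exact ev_pos hF (z ℓ)
  have hEv : (fun s : ℝ =>
        deriv (fun t : ℝ => ECB N ε φ (fun ℓ => yLin ε F ℓ + t • u ℓ + s • v ℓ)) 0)
      =ᶠ[nhds 0] (fun s : ℝ => ε * ∑ ℓ ∈ Finset.Icc (1:ℤ) (N:ℤ),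
        (bondD φ 1 (((F,0) : ℝ × ℝ) + s • z ℓ) (bd ε u ℓ)
          + bondD φ 2 (((F,0) : ℝ × ℝ) + s • z ℓ) (bd ε u ℓ))) := by
    filter_upwards [hev1] with s hs1
    have hyb : ∀ ℓ : ℤ, bd ε (fun m => yLin ε F m + s • v m) ℓ = ((F,0) : ℝ × ℝ) + s • z ℓ :=
      fun ℓ => by rw [bd_add_smul, bd_yLin hε]
    have funeq : (fun t : ℝ => ECB N ε φ (fun ℓ => yLin ε F ℓ + t • u ℓ + s • v ℓ))
        = (fun t : ℝ => ECB N ε φ (fun m => (yLin ε F m + s • v m) + t • u m)) := by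
      funext t; congr 1; funext ℓ; rw [add_right_comm]
    have hpos1 : ∀ ℓ ∈ Finset.Icc (1:ℤ) (N:ℤ),
        0 < enorm2 (bd ε (fun m => yLin ε F m + s • v m) ℓ) := by
      intro ℓ hℓ; rw [hyb]; exact hs1 ℓ hℓ
    rw [funeq, (hasDerivAt_ECB hφ (fun m => yLin ε F m + s • v m) u hpos1).deriv]
    congr 1
    apply Finset.sum_congr rfl
    intro ℓ _
    rw [hyb]
  rw [d2E, hEv.deriv_eq]
  have H2 : HasDerivAt (fun s : ℝ => ε * ∑ ℓ ∈ Finset.Icc (1:ℤ) (N:ℤ),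
      (bondD φ 1 (((F,0) : ℝ × ℝ) + s • z ℓ) (bd ε u ℓ)
        + bondD φ 2 (((F,0) : ℝ × ℝ) + s • z ℓ) (bd ε u ℓ)))
      (ε * ∑ ℓ ∈ Finset.Icc (1:ℤ) (N:ℤ),
        (((1:ℝ)^2 * deriv (deriv φ) (1*F) * ((bd ε u ℓ).1 * (z ℓ).1)
          + 1 * deriv φ (1*F) * ((bd ε u ℓ).2 * (z ℓ).2) / F)
        + ((2:ℝ)^2 * deriv (deriv φ) (2*F) * ((bd ε u ℓ).1 * (z ℓ).1)
          + 2 * deriv φ (2*F) * ((bd ε u ℓ).2 * (z ℓ).2) / F))) 0 := by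
    refine HasDerivAt.const_mul ε (HasDerivAt.fun_sum ?_)
    intro ℓ _
    exact (master2 hφ one_pos hF (bd ε u ℓ) (z ℓ)).add
      (master2 hφ two_pos hF (bd ε u ℓ) (z ℓ))
  rw [H2.deriv]
  congr 1
  apply Finset.sum_congr rfl
  intro ℓ _
  simp only [one_pow, one_mul]

lemma bd_fst (ε : ℝ) (u : ℤ → ℝ × ℝ) (ℓ : ℤ) :
    (bd ε u ℓ).1 = d1 ε (fun m => (u m).1) ℓ := rfl
lemma bd_snd (ε : ℝ) (u : ℤ → ℝ × ℝ) (ℓ : ℤ) :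
    (bd ε u ℓ).2 = d1 ε (fun m => (u m).2) ℓ := rfl

lemma cs2 (x y : ℝ × ℝ) : |x.1 * y.1| + |x.2 * y.2| ≤ enorm2 x * enorm2 y := by
  have h : enorm2 x * enorm2 y = Real.sqrt ((x.1^2 + x.2^2) * (y.1^2 + y.2^2)) := by
    rw [enorm2, enorm2, ← Real.sqrt_mul (by positivity)]
  rw [h]
  rw [show |x.1 * y.1| = |x.1| * |y.1| from abs_mul _ _,
    show |x.2 * y.2| = |x.2| * |y.2| from abs_mul _ _]
  rw [← Real.sqrt_sq (show (0:ℝ) ≤ |x.1| * |y.1| + |x.2| * |y.2| by positivity)]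
  apply Real.sqrt_le_sqrt
  have h1 : x.1^2 = |x.1|^2 := (sq_abs _).symm
  have h2 : x.2^2 = |x.2|^2 := (sq_abs _).symm
  have h3 : y.1^2 = |y.1|^2 := (sq_abs _).symm
  have h4 : y.2^2 = |y.2|^2 := (sq_abs _).symm
  rw [h1, h2, h3, h4]
  nlinarith [sq_nonneg (|x.1| * |y.2| - |x.2| * |y.1|)]
theorem stmt_9 (N : ℕ) (hN : 4 ≤ N) (ε : ℝ) (hε : ε = (N : ℝ)⁻¹)
    (φ : ℝ → ℝ) (hφ : ContDiffOn ℝ 2 φ (Set.Ioi 0)) (F : ℝ) (hF : 0 < F)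
    (f ua : ℤ → ℝ × ℝ) (hf : IsDisp N f) (hua : IsDisp N ua)
    (heq : ∀ v : ℤ → ℝ × ℝ, IsDisp N v →
      dE (Ea N ε φ) (yLin ε F) v + d2E (Ea N ε φ) (yLin ε F) ua v = ip N ε f v) :
    ∀ v : ℤ → ℝ × ℝ, IsDisp N v →
      |dE (ECB N ε φ) (yLin ε F) v + d2E (ECB N ε φ) (yLin ε F) ua v - ip N ε f v| ≤
        ε ^ 2 * max |deriv (deriv φ) (2 * F)| |deriv φ (2 * F) / (2 * F)| *
          nrm N ε (bd ε (bd ε (bd ε ua))) * nrm N ε (bd ε v) := by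
  intro v hv
  have hN1 : (1:ℤ) ≤ (N:ℤ) := by exact_mod_cast (by omega : 1 ≤ N)
  have hNR : (0:ℝ) < (N:ℝ) := by exact_mod_cast (by omega : 0 < N)
  have hε0 : (0:ℝ) < ε := by rw [hε]; exact inv_pos.2 hNR
  have hεne : ε ≠ 0 := hε0.ne'
  have h2F : (0:ℝ) < 2*F := by positivity
  have hFne : F ≠ 0 := hF.ne'
  have h2Fne : (2*F) ≠ 0 := h2F.ne'
  -- periodicity of difference quotients
  have hzx : ∀ ℓ : ℤ, bd ε v (ℓ + (N:ℤ)) = bd ε v ℓ := bd_periodic hv.1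
  have hax : ∀ ℓ : ℤ, bd ε ua (ℓ + (N:ℤ)) = bd ε ua ℓ := bd_periodic hua.1
  have hwx : ∀ ℓ : ℤ, bd ε (bd ε (bd ε ua)) (ℓ + (N:ℤ)) = bd ε (bd ε (bd ε ua)) ℓ :=
    bd_periodic (bd_periodic (bd_periodic hua.1))
  -- first variations agree
  have hzsh : ∑ ℓ ∈ Finset.Icc (1:ℤ) (N:ℤ), (bd ε v (ℓ+1)).1
      = ∑ ℓ ∈ Finset.Icc (1:ℤ) (N:ℤ), (bd ε v ℓ).1 :=
    sum_shift hN1 (fun ℓ => (bd ε v ℓ).1) (fun ℓ => by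
      show (bd ε v (ℓ + (N:ℤ))).1 = (bd ε v ℓ).1
      rw [hzx])
  have e1 : dE (ECB N ε φ) (yLin ε F) v = dE (Ea N ε φ) (yLin ε F) v := by
    rw [dECB_eval hφ hεne hF v, dEa_eval hφ hεne hF v]
    congr 1
    rw [Finset.sum_add_distrib, Finset.sum_add_distrib]
    congr 1
    rw [← Finset.mul_sum, ← Finset.mul_sum, Finset.sum_add_distrib, hzsh]
    ring
  -- scalar identities for both components
  have hid1 := scalar_id hN1 hεne (fun m => (bd ε ua m).1) (fun m => (bd ε v m).1)
    (fun ℓ => by show (bd ε ua (ℓ + (N:ℤ))).1 = (bd ε ua ℓ).1; rw [hax])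
    (fun ℓ => by show (bd ε v (ℓ + (N:ℤ))).1 = (bd ε v ℓ).1; rw [hzx])
  have hid2 := scalar_id hN1 hεne (fun m => (bd ε ua m).2) (fun m => (bd ε v m).2)
    (fun ℓ => by show (bd ε ua (ℓ + (N:ℤ))).2 = (bd ε ua ℓ).2; rw [hax])
    (fun ℓ => by show (bd ε v (ℓ + (N:ℤ))).2 = (bd ε v ℓ).2; rw [hzx])
  -- third difference components
  have hw1 : ∀ m : ℤ, d1 ε (d1 ε (fun k => (bd ε ua k).1)) m = (bd ε (bd ε (bd ε ua)) m).1 := by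
    intro m
    have h2 : (fun k => (bd ε (bd ε ua) k).1) = d1 ε (fun k => (bd ε ua k).1) :=
      funext fun k => bd_fst ε (bd ε ua) k
    rw [bd_fst ε (bd ε (bd ε ua)) m, h2]
  have hw2 : ∀ m : ℤ, d1 ε (d1 ε (fun k => (bd ε ua k).2)) m = (bd ε (bd ε (bd ε ua)) m).2 := by
    intro m
    have h2 : (fun k => (bd ε (bd ε ua) k).2) = d1 ε (fun k => (bd ε ua k).2) :=
      funext fun k => bd_snd ε (bd ε ua) k
    rw [bd_snd ε (bd ε (bd ε ua)) m, h2]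
  -- second variation difference
  have e2 : d2E (ECB N ε φ) (yLin ε F) ua v - d2E (Ea N ε φ) (yLin ε F) ua v
      = -(ε^3 * ∑ ℓ ∈ Finset.Icc (1:ℤ) (N:ℤ),
          (deriv (deriv φ) (2*F) * ((bd ε (bd ε (bd ε ua)) (ℓ+1)).1 * (bd ε v ℓ).1)
            + deriv φ (2*F) / (2*F) * ((bd ε (bd ε (bd ε ua)) (ℓ+1)).2 * (bd ε v ℓ).2))) := by
    rw [d2ECB_eval hφ hεne hF ua v, d2Ea_eval hφ hεne hF ua v]
    rw [← mul_sub, ← Finset.sum_sub_distrib]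
    have hterm : ∀ ℓ ∈ Finset.Icc (1:ℤ) (N:ℤ),
        (deriv (deriv φ) F * ((bd ε ua ℓ).1 * (bd ε v ℓ).1)
          + deriv φ F * ((bd ε ua ℓ).2 * (bd ε v ℓ).2) / F
          + (2^2 * deriv (deriv φ) (2*F) * ((bd ε ua ℓ).1 * (bd ε v ℓ).1)
            + 2 * deriv φ (2*F) * ((bd ε ua ℓ).2 * (bd ε v ℓ).2) / F))
        - (deriv (deriv φ) F * ((bd ε ua ℓ).1 * (bd ε v ℓ).1)
          + deriv φ F * ((bd ε ua ℓ).2 * (bd ε v ℓ).2) / F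
          + (deriv (deriv φ) (2*F) *
              ((bd ε ua (ℓ+1) + bd ε ua ℓ).1 * (bd ε v (ℓ+1) + bd ε v ℓ).1)
            + deriv φ (2*F) *
              ((bd ε ua (ℓ+1) + bd ε ua ℓ).2 * (bd ε v (ℓ+1) + bd ε v ℓ).2) / (2*F)))
        = deriv (deriv φ) (2*F) *
            (4 * (bd ε ua ℓ).1 * (bd ε v ℓ).1
              - ((bd ε ua (ℓ+1)).1 + (bd ε ua ℓ).1) * ((bd ε v (ℓ+1)).1 + (bd ε v ℓ).1))
          + deriv φ (2*F) / (2*F) *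
            (4 * (bd ε ua ℓ).2 * (bd ε v ℓ).2
              - ((bd ε ua (ℓ+1)).2 + (bd ε ua ℓ).2) * ((bd ε v (ℓ+1)).2 + (bd ε v ℓ).2)) := by
      intro ℓ _
      simp only [Prod.fst_add, Prod.snd_add]
      field_simp
      ring
    rw [Finset.sum_congr rfl hterm, Finset.sum_add_distrib, ← Finset.mul_sum, ← Finset.mul_sum,
      hid1, hid2]
    have hS1 : ∑ ℓ ∈ Finset.Icc (1:ℤ) (N:ℤ),
        d1 ε (d1 ε (fun m => (bd ε ua m).1)) (ℓ+1) * (bd ε v ℓ).1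
        = ∑ ℓ ∈ Finset.Icc (1:ℤ) (N:ℤ), (bd ε (bd ε (bd ε ua)) (ℓ+1)).1 * (bd ε v ℓ).1 :=
      Finset.sum_congr rfl fun ℓ _ => by rw [hw1]
    have hS2 : ∑ ℓ ∈ Finset.Icc (1:ℤ) (N:ℤ),
        d1 ε (d1 ε (fun m => (bd ε ua m).2)) (ℓ+1) * (bd ε v ℓ).2
        = ∑ ℓ ∈ Finset.Icc (1:ℤ) (N:ℤ), (bd ε (bd ε (bd ε ua)) (ℓ+1)).2 * (bd ε v ℓ).2 :=
      Finset.sum_congr rfl fun ℓ _ => by rw [hw2]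
    rw [hS1, hS2, Finset.sum_add_distrib, ← Finset.mul_sum, ← Finset.mul_sum]
    ring
  -- put it together
  have hΔ : dE (ECB N ε φ) (yLin ε F) v + d2E (ECB N ε φ) (yLin ε F) ua v - ip N ε f v
      = -(ε^3 * ∑ ℓ ∈ Finset.Icc (1:ℤ) (N:ℤ),
          (deriv (deriv φ) (2*F) * ((bd ε (bd ε (bd ε ua)) (ℓ+1)).1 * (bd ε v ℓ).1)
            + deriv φ (2*F) / (2*F) * ((bd ε (bd ε (bd ε ua)) (ℓ+1)).2 * (bd ε v ℓ).2))) := by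
    have hsplit : dE (ECB N ε φ) (yLin ε F) v + d2E (ECB N ε φ) (yLin ε F) ua v - ip N ε f v
        = (dE (ECB N ε φ) (yLin ε F) v - dE (Ea N ε φ) (yLin ε F) v)
          + (d2E (ECB N ε φ) (yLin ε F) ua v - d2E (Ea N ε φ) (yLin ε F) ua v) := by
      rw [← heq v hv]; ring
    rw [hsplit, e1, e2]; ring
  rw [hΔ, abs_neg, abs_mul, abs_of_pos (show (0:ℝ) < ε^3 by positivity)]
  -- notation
  set A := deriv (deriv φ) (2*F) with hAdef
  set Bq := deriv φ (2*F) / (2*F) with hBdef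
  set M := max |A| |Bq| with hMdef
  have hM0 : 0 ≤ M := le_trans (abs_nonneg A) (le_max_left _ _)
  have henorm_nonneg : ∀ x : ℝ × ℝ, 0 ≤ enorm2 x := fun x => Real.sqrt_nonneg _
  -- step 1: bound the sum
  have hstep1 : |∑ ℓ ∈ Finset.Icc (1:ℤ) (N:ℤ),
      (A * ((bd ε (bd ε (bd ε ua)) (ℓ+1)).1 * (bd ε v ℓ).1)
        + Bq * ((bd ε (bd ε (bd ε ua)) (ℓ+1)).2 * (bd ε v ℓ).2))|
      ≤ M * ∑ ℓ ∈ Finset.Icc (1:ℤ) (N:ℤ),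
          enorm2 (bd ε (bd ε (bd ε ua)) (ℓ+1)) * enorm2 (bd ε v ℓ) := by
    calc |∑ ℓ ∈ Finset.Icc (1:ℤ) (N:ℤ),
        (A * ((bd ε (bd ε (bd ε ua)) (ℓ+1)).1 * (bd ε v ℓ).1)
          + Bq * ((bd ε (bd ε (bd ε ua)) (ℓ+1)).2 * (bd ε v ℓ).2))|
        ≤ ∑ ℓ ∈ Finset.Icc (1:ℤ) (N:ℤ),
          |A * ((bd ε (bd ε (bd ε ua)) (ℓ+1)).1 * (bd ε v ℓ).1)
            + Bq * ((bd ε (bd ε (bd ε ua)) (ℓ+1)).2 * (bd ε v ℓ).2)| :=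
        Finset.abs_sum_le_sum_abs _ _
      _ ≤ ∑ ℓ ∈ Finset.Icc (1:ℤ) (N:ℤ),
          M * (enorm2 (bd ε (bd ε (bd ε ua)) (ℓ+1)) * enorm2 (bd ε v ℓ)) := by
        apply Finset.sum_le_sum
        intro ℓ _
        have ha1 : |A * ((bd ε (bd ε (bd ε ua)) (ℓ+1)).1 * (bd ε v ℓ).1)|
            ≤ M * |(bd ε (bd ε (bd ε ua)) (ℓ+1)).1 * (bd ε v ℓ).1| := by
          rw [abs_mul]
          exact mul_le_mul_of_nonneg_right (le_max_left _ _) (abs_nonneg _)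
        have ha2 : |Bq * ((bd ε (bd ε (bd ε ua)) (ℓ+1)).2 * (bd ε v ℓ).2)|
            ≤ M * |(bd ε (bd ε (bd ε ua)) (ℓ+1)).2 * (bd ε v ℓ).2| := by
          rw [abs_mul]
          exact mul_le_mul_of_nonneg_right (le_max_right _ _) (abs_nonneg _)
        refine le_trans (abs_add_le _ _) (le_trans (add_le_add ha1 ha2) ?_)
        rw [← mul_add]
        exact mul_le_mul_of_nonneg_left (cs2 _ _) hM0
      _ = M * ∑ ℓ ∈ Finset.Icc (1:ℤ) (N:ℤ),
          enorm2 (bd ε (bd ε (bd ε ua)) (ℓ+1)) * enorm2 (bd ε v ℓ) := by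
        rw [← Finset.mul_sum]
  -- step 2 : Cauchy-Schwarz on the sum
  have hwsh : ∑ ℓ ∈ Finset.Icc (1:ℤ) (N:ℤ), enorm2 (bd ε (bd ε (bd ε ua)) (ℓ+1))^2
      = ∑ ℓ ∈ Finset.Icc (1:ℤ) (N:ℤ), enorm2 (bd ε (bd ε (bd ε ua)) ℓ)^2 :=
    sum_shift hN1 (fun ℓ => enorm2 (bd ε (bd ε (bd ε ua)) ℓ)^2) (fun ℓ => by
      show enorm2 (bd ε (bd ε (bd ε ua)) (ℓ + (N:ℤ)))^2 = _
      rw [hwx])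
  have hstep2 : ∑ ℓ ∈ Finset.Icc (1:ℤ) (N:ℤ),
      enorm2 (bd ε (bd ε (bd ε ua)) (ℓ+1)) * enorm2 (bd ε v ℓ)
      ≤ Real.sqrt (∑ ℓ ∈ Finset.Icc (1:ℤ) (N:ℤ), enorm2 (bd ε (bd ε (bd ε ua)) ℓ)^2)
        * Real.sqrt (∑ ℓ ∈ Finset.Icc (1:ℤ) (N:ℤ), enorm2 (bd ε v ℓ)^2) := by
    have hcs := Finset.sum_mul_sq_le_sq_mul_sq (Finset.Icc (1:ℤ) (N:ℤ))
      (fun ℓ => enorm2 (bd ε (bd ε (bd ε ua)) (ℓ+1))) (fun ℓ => enorm2 (bd ε v ℓ))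
    have hT0 : 0 ≤ ∑ ℓ ∈ Finset.Icc (1:ℤ) (N:ℤ),
        enorm2 (bd ε (bd ε (bd ε ua)) (ℓ+1)) * enorm2 (bd ε v ℓ) :=
      Finset.sum_nonneg fun ℓ _ => mul_nonneg (henorm_nonneg _) (henorm_nonneg _)
    have h := Real.sqrt_le_sqrt hcs
    rw [Real.sqrt_sq hT0, Real.sqrt_mul (Finset.sum_nonneg fun ℓ _ => sq_nonneg _)] at h
    rw [← hwsh]
    exact h
  -- conclude
  calc ε^3 * |∑ ℓ ∈ Finset.Icc (1:ℤ) (N:ℤ),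
      (A * ((bd ε (bd ε (bd ε ua)) (ℓ+1)).1 * (bd ε v ℓ).1)
        + Bq * ((bd ε (bd ε (bd ε ua)) (ℓ+1)).2 * (bd ε v ℓ).2))|
      ≤ ε^3 * (M * (Real.sqrt (∑ ℓ ∈ Finset.Icc (1:ℤ) (N:ℤ),
            enorm2 (bd ε (bd ε (bd ε ua)) ℓ)^2)
        * Real.sqrt (∑ ℓ ∈ Finset.Icc (1:ℤ) (N:ℤ), enorm2 (bd ε v ℓ)^2))) := by
          exact mul_le_mul_of_nonneg_left
            (le_trans hstep1 (mul_le_mul_of_nonneg_left hstep2 hM0))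
            (by positivity : (0:ℝ) ≤ ε^3)
    _ = ε^2 * M * nrm N ε (bd ε (bd ε (bd ε ua))) * nrm N ε (bd ε v) := by
      rw [nrm, nrm, Real.sqrt_mul hε0.le, Real.sqrt_mul hε0.le]
      have hse : Real.sqrt ε * Real.sqrt ε = ε := Real.mul_self_sqrt hε0.le
      linear_combination (-(ε^2) * M * Real.sqrt (∑ ℓ ∈ Finset.Icc (1:ℤ) (N:ℤ),
          enorm2 (bd ε (bd ε (bd ε ua)) ℓ)^2)
        * Real.sqrt (∑ ℓ ∈ Finset.Icc (1:ℤ) (N:ℤ), enorm2 (bd ε v ℓ)^2)) * hse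
end
end

section
/- Let y_F be the linear chain with nearest-neighbor spacing Fε, and suppose γ₂ := min{ φ''(F) + 4 φ''(2F), (φ'(F) + 2 φ'(2F))/F } > 0. Given f ∈ 𝒰, let u^a, u^CB ∈ 𝒰 satisfy δE^a(y_F)[v] + δ²E^a(y_F)[u^a, v] = ⟨f, v⟩ and δE^CB(y_F)[v] + δ²E^CB(y_F)[u^CB, v] = ⟨f, v⟩, respectively, for all v ∈ 𝒰. Then ‖(u^a − u^CB)'‖_{ℓ²_ε} ≤ (ε² max{ |φ''(2F)|, |φ'(2F)/(2F)| } / γ₂) ‖(u^a)'''‖_{ℓ²_ε}. -/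
noncomputable section

open Real Finset

section AuxLemmas
set_option maxHeartbeats 1000000
def auxQ (r : ℝ) (b : ℝ × ℝ) (s : ℝ) : ℝ := (r + s * b.1) ^ 2 + (s * b.2) ^ 2
def auxP (r : ℝ) (a b : ℝ × ℝ) (s : ℝ) : ℝ := (r + s * b.1) * a.1 + (s * b.2) * a.2
def auxH (φ : ℝ → ℝ) (r : ℝ) (a b : ℝ × ℝ) (s : ℝ) : ℝ :=
  deriv φ (Real.sqrt (auxQ r b s)) * (auxP r a b s / Real.sqrt (auxQ r b s))
def auxH2 (φ : ℝ → ℝ) (r : ℝ) (a b : ℝ × ℝ) (s : ℝ) : ℝ :=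
  deriv φ (2 * Real.sqrt (auxQ r b s)) * (2 * auxP r a b s / Real.sqrt (auxQ r b s))

variable {φ : ℝ → ℝ}

lemma aux_sum_shift {M : Type*} [AddCommGroup M] (N : ℕ) (hN : 1 ≤ N) (g : ℤ → M)
    (hg : ∀ ℓ, g (ℓ + N) = g ℓ) :
    ∑ ℓ ∈ Icc (1 : ℤ) (N : ℤ), g (ℓ + 1) = ∑ ℓ ∈ Icc (1 : ℤ) (N : ℤ), g ℓ := by
  have h1 : ∑ ℓ ∈ Icc (1 : ℤ) (N : ℤ), g (ℓ + 1) = ∑ ℓ ∈ Icc (2 : ℤ) ((N : ℤ) + 1), g ℓ := by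
    have : Icc (2 : ℤ) ((N : ℤ) + 1) = Finset.map (addRightEmbedding 1) (Icc (1 : ℤ) (N : ℤ)) := by
      rw [Finset.map_add_right_Icc]; norm_num
    rw [this, Finset.sum_map]
    simp [addRightEmbedding_apply]
  have hIcc1 : Icc (1 : ℤ) (N : ℤ) = insert (1 : ℤ) (Icc 2 (N : ℤ)) := by
    ext x; simp [Finset.mem_Icc]; omega
  have hIcc2 : Icc (2 : ℤ) ((N : ℤ) + 1) = insert ((N : ℤ) + 1) (Icc 2 (N : ℤ)) := by
    ext x; simp [Finset.mem_Icc]; omega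
  have hg1 : g ((N : ℤ) + 1) = g 1 := by rw [add_comm]; exact hg 1
  rw [h1, hIcc1, hIcc2, Finset.sum_insert (by simp), Finset.sum_insert (by simp [Finset.mem_Icc])]
  rw [hg1]

lemma aux_hasDerivAt_t (hφ1 : ∀ x, 0 < x → HasDerivAt φ (deriv φ x) x)
    (r : ℝ) (a b : ℝ × ℝ) (s : ℝ) (hq : 0 < auxQ r b s) :
    HasDerivAt (fun t : ℝ => φ (enorm2 ((r, (0 : ℝ)) + t • a + s • b))) (auxH φ r a b s) 0 := by
  have hfun : (fun t : ℝ => φ (enorm2 ((r, (0 : ℝ)) + t • a + s • b)))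
      = fun t : ℝ => φ (Real.sqrt ((r + s * b.1 + t * a.1) ^ 2 + (s * b.2 + t * a.2) ^ 2)) := by
    funext t
    have : (r, (0 : ℝ)) + t • a + s • b = (r + s * b.1 + t * a.1, s * b.2 + t * a.2) := by
      simp [Prod.ext_iff, Prod.smul_def, smul_eq_mul]; constructor <;> ring
    rw [this]; rfl
  rw [hfun]
  have h1 : HasDerivAt (fun t : ℝ => r + s * b.1 + t * a.1) a.1 0 := by
    simpa using ((hasDerivAt_id (0 : ℝ)).mul_const a.1).const_add (r + s * b.1)
  have h2 : HasDerivAt (fun t : ℝ => s * b.2 + t * a.2) a.2 0 := by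
    simpa using ((hasDerivAt_id (0 : ℝ)).mul_const a.2).const_add (s * b.2)
  have hq' : HasDerivAt (fun t : ℝ => (r + s * b.1 + t * a.1) ^ 2 + (s * b.2 + t * a.2) ^ 2)
      (2 * (r + s * b.1) * a.1 + 2 * (s * b.2) * a.2) 0 := by
    have := (h1.fun_pow 2).fun_add (h2.fun_pow 2)
    simpa using this
  have hq0 : (r + s * b.1 + (0:ℝ) * a.1) ^ 2 + (s * b.2 + (0:ℝ) * a.2) ^ 2 = auxQ r b s := by
    simp [auxQ]
  have hqne : auxQ r b s ≠ 0 := ne_of_gt hq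
  have hgout : HasDerivAt Real.sqrt (1 / (2 * Real.sqrt (auxQ r b s)))
      ((r + s * b.1 + (0:ℝ) * a.1) ^ 2 + (s * b.2 + (0:ℝ) * a.2) ^ 2) := by
    rw [hq0]; exact Real.hasDerivAt_sqrt hqne
  have hsqrt : HasDerivAt (fun t : ℝ => Real.sqrt ((r + s * b.1 + t * a.1) ^ 2 + (s * b.2 + t * a.2) ^ 2))
      (1 / (2 * Real.sqrt (auxQ r b s)) * (2 * (r + s * b.1) * a.1 + 2 * (s * b.2) * a.2)) 0 :=
    hgout.comp 0 hq'
  have hpos : 0 < Real.sqrt (auxQ r b s) := Real.sqrt_pos.2 hq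
  have hpout : HasDerivAt φ (deriv φ (Real.sqrt (auxQ r b s)))
      (Real.sqrt ((r + s * b.1 + (0:ℝ) * a.1) ^ 2 + (s * b.2 + (0:ℝ) * a.2) ^ 2)) := by
    rw [hq0]; exact hφ1 _ hpos
  have := hpout.comp 0 hsqrt
  have heq : deriv φ (Real.sqrt (auxQ r b s)) *
      (1 / (2 * Real.sqrt (auxQ r b s)) * (2 * (r + s * b.1) * a.1 + 2 * (s * b.2) * a.2))
      = auxH φ r a b s := by
    unfold auxH auxP
    field_simp
  rw [← heq]
  simpa [Function.comp_def, hq0] using this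

lemma aux_hasDerivAt_t2 (hφ1 : ∀ x, 0 < x → HasDerivAt φ (deriv φ x) x)
    (r : ℝ) (a b : ℝ × ℝ) (s : ℝ) (hq : 0 < auxQ r b s) :
    HasDerivAt (fun t : ℝ => φ (2 * enorm2 ((r, (0 : ℝ)) + t • a + s • b))) (auxH2 φ r a b s) 0 := by
  have hfun : (fun t : ℝ => φ (2 * enorm2 ((r, (0 : ℝ)) + t • a + s • b)))
      = fun t : ℝ => φ (2 * Real.sqrt ((r + s * b.1 + t * a.1) ^ 2 + (s * b.2 + t * a.2) ^ 2)) := by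
    funext t
    have : (r, (0 : ℝ)) + t • a + s • b = (r + s * b.1 + t * a.1, s * b.2 + t * a.2) := by
      simp [Prod.ext_iff, Prod.smul_def, smul_eq_mul]; constructor <;> ring
    rw [this]; rfl
  rw [hfun]
  have h1 : HasDerivAt (fun t : ℝ => r + s * b.1 + t * a.1) a.1 0 := by
    simpa using ((hasDerivAt_id (0 : ℝ)).mul_const a.1).const_add (r + s * b.1)
  have h2 : HasDerivAt (fun t : ℝ => s * b.2 + t * a.2) a.2 0 := by
    simpa using ((hasDerivAt_id (0 : ℝ)).mul_const a.2).const_add (s * b.2)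
  have hq' : HasDerivAt (fun t : ℝ => (r + s * b.1 + t * a.1) ^ 2 + (s * b.2 + t * a.2) ^ 2)
      (2 * (r + s * b.1) * a.1 + 2 * (s * b.2) * a.2) 0 := by
    have := (h1.fun_pow 2).fun_add (h2.fun_pow 2)
    simpa using this
  have hq0 : (r + s * b.1 + (0:ℝ) * a.1) ^ 2 + (s * b.2 + (0:ℝ) * a.2) ^ 2 = auxQ r b s := by
    simp [auxQ]
  have hqne : auxQ r b s ≠ 0 := ne_of_gt hq
  have hgout : HasDerivAt Real.sqrt (1 / (2 * Real.sqrt (auxQ r b s)))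
      ((r + s * b.1 + (0:ℝ) * a.1) ^ 2 + (s * b.2 + (0:ℝ) * a.2) ^ 2) := by
    rw [hq0]; exact Real.hasDerivAt_sqrt hqne
  have hsqrt : HasDerivAt (fun t : ℝ => 2 * Real.sqrt ((r + s * b.1 + t * a.1) ^ 2 + (s * b.2 + t * a.2) ^ 2))
      (2 * (1 / (2 * Real.sqrt (auxQ r b s)) * (2 * (r + s * b.1) * a.1 + 2 * (s * b.2) * a.2))) 0 :=
    (hgout.comp 0 hq').const_mul 2
  have hpos : 0 < 2 * Real.sqrt (auxQ r b s) := by positivity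
  have hpout : HasDerivAt φ (deriv φ (2 * Real.sqrt (auxQ r b s)))
      (2 * Real.sqrt ((r + s * b.1 + (0:ℝ) * a.1) ^ 2 + (s * b.2 + (0:ℝ) * a.2) ^ 2)) := by
    rw [hq0]; exact hφ1 _ hpos
  have := hpout.comp 0 hsqrt
  have heq : deriv φ (2 * Real.sqrt (auxQ r b s)) *
      (2 * (1 / (2 * Real.sqrt (auxQ r b s)) * (2 * (r + s * b.1) * a.1 + 2 * (s * b.2) * a.2)))
      = auxH2 φ r a b s := by
    unfold auxH2 auxP
    have : Real.sqrt (auxQ r b s) ≠ 0 := by positivity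
    field_simp
  rw [← heq]
  simpa [Function.comp_def, hq0] using this

lemma auxH_zero (r : ℝ) (hr : 0 < r) (a b : ℝ × ℝ) : auxH φ r a b 0 = deriv φ r * a.1 := by
  have h0 : auxQ r b 0 = r ^ 2 := by simp [auxQ]
  have hP0 : auxP r a b 0 = r * a.1 := by simp [auxP]
  rw [auxH, h0, hP0, Real.sqrt_sq hr.le]
  field_simp

lemma auxH2_zero (r : ℝ) (hr : 0 < r) (a b : ℝ × ℝ) :
    auxH2 φ r a b 0 = deriv φ (2 * r) * (2 * a.1) := by
  have h0 : auxQ r b 0 = r ^ 2 := by simp [auxQ]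
  have hP0 : auxP r a b 0 = r * a.1 := by simp [auxP]
  rw [auxH2, h0, hP0, Real.sqrt_sq hr.le]
  field_simp

lemma auxQ_pos_eventually (r : ℝ) (hr : 0 < r) (b : ℝ × ℝ) :
    ∀ᶠ s in nhds (0 : ℝ), 0 < auxQ r b s := by
  have hc : ContinuousAt (auxQ r b) 0 := by unfold auxQ; fun_prop
  have h0 : 0 < auxQ r b 0 := by simp [auxQ]; positivity
  exact hc.eventually (eventually_gt_nhds h0)

lemma auxsq : ∀ (r : ℝ) (b : ℝ × ℝ), HasDerivAt (auxQ r b) (2 * r * b.1) 0 := by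
  intro r b
  have h1 : HasDerivAt (fun s : ℝ => r + s * b.1) b.1 0 := by
    simpa using ((hasDerivAt_id (0 : ℝ)).mul_const b.1).const_add r
  have h2 : HasDerivAt (fun s : ℝ => s * b.2) b.2 0 := by
    simpa using (hasDerivAt_id (0 : ℝ)).mul_const b.2
  have := (h1.fun_pow 2).fun_add (h2.fun_pow 2)
  unfold auxQ
  refine this.congr_deriv ?_
  norm_num

lemma auxsqrt (r : ℝ) (hr : 0 < r) (b : ℝ × ℝ) :
    HasDerivAt (fun s => Real.sqrt (auxQ r b s)) b.1 0 := by
  have h0 : auxQ r b 0 = r ^ 2 := by simp [auxQ]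
  have hgout : HasDerivAt Real.sqrt (1 / (2 * r)) (auxQ r b 0) := by
    rw [h0]
    have := Real.hasDerivAt_sqrt (x := r ^ 2) (by positivity)
    rwa [Real.sqrt_sq hr.le] at this
  have := hgout.comp 0 (auxsq r b)
  refine this.congr_deriv ?_
  field_simp

lemma auxP_hasDeriv (r : ℝ) (a b : ℝ × ℝ) :
    HasDerivAt (auxP r a b) (b.1 * a.1 + b.2 * a.2) 0 := by
  have h1 : HasDerivAt (fun s : ℝ => (r + s * b.1) * a.1) (b.1 * a.1) 0 := by
    simpa using (((hasDerivAt_id (0 : ℝ)).mul_const b.1).const_add r).mul_const a.1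
  have h2 : HasDerivAt (fun s : ℝ => (s * b.2) * a.2) (b.2 * a.2) 0 := by
    simpa using ((hasDerivAt_id (0 : ℝ)).mul_const b.2).mul_const a.2
  exact h1.add h2

lemma auxH_hasDerivAt (hφ2 : ∀ x, 0 < x → HasDerivAt (deriv φ) (deriv (deriv φ) x) x)
    (r : ℝ) (hr : 0 < r) (a b : ℝ × ℝ) :
    HasDerivAt (auxH φ r a b)
      (deriv (deriv φ) r * (a.1 * b.1) + deriv φ r * (a.2 * b.2) / r) 0 := by
  have h0 : auxQ r b 0 = r ^ 2 := by simp [auxQ]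
  have hs0 : Real.sqrt (auxQ r b 0) = r := by rw [h0, Real.sqrt_sq hr.le]
  have hP0 : auxP r a b 0 = r * a.1 := by simp [auxP]
  have hout : HasDerivAt (deriv φ) (deriv (deriv φ) r) (Real.sqrt (auxQ r b 0)) := by
    rw [hs0]; exact hφ2 r hr
  have hφQ : HasDerivAt (fun s => deriv φ (Real.sqrt (auxQ r b s))) (deriv (deriv φ) r * b.1) 0 :=
    by exact hout.comp 0 (auxsqrt r hr b)
  have hdiv : HasDerivAt (fun s => auxP r a b s / Real.sqrt (auxQ r b s))
      (((b.1 * a.1 + b.2 * a.2) * r - (r * a.1) * b.1) / r ^ 2) 0 := by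
    have := (auxP_hasDeriv r a b).div (auxsqrt r hr b) (by rw [hs0]; exact hr.ne')
    rw [hs0, hP0] at this
    exact this
  have := hφQ.fun_mul hdiv
  unfold auxH
  refine this.congr_deriv ?_
  rw [hs0, hP0]
  field_simp
  ring

lemma auxH2_hasDerivAt (hφ2 : ∀ x, 0 < x → HasDerivAt (deriv φ) (deriv (deriv φ) x) x)
    (r : ℝ) (hr : 0 < r) (a b : ℝ × ℝ) :
    HasDerivAt (auxH2 φ r a b)
      (4 * deriv (deriv φ) (2 * r) * (a.1 * b.1) + 2 * deriv φ (2 * r) * (a.2 * b.2) / r) 0 := by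
  have h0 : auxQ r b 0 = r ^ 2 := by simp [auxQ]
  have hs0 : Real.sqrt (auxQ r b 0) = r := by rw [h0, Real.sqrt_sq hr.le]
  have hP0 : auxP r a b 0 = r * a.1 := by simp [auxP]
  have hout : HasDerivAt (deriv φ) (deriv (deriv φ) (2 * r)) (2 * Real.sqrt (auxQ r b 0)) := by
    rw [hs0]; exact hφ2 (2 * r) (by positivity)
  have hφQ : HasDerivAt (fun s => deriv φ (2 * Real.sqrt (auxQ r b s)))
      (deriv (deriv φ) (2 * r) * (2 * b.1)) 0 := by
    have hin : HasDerivAt (fun s => 2 * Real.sqrt (auxQ r b s)) (2 * b.1) 0 :=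
      (auxsqrt r hr b).const_mul 2
    exact hout.comp 0 hin
  have hdiv : HasDerivAt (fun s => 2 * auxP r a b s / Real.sqrt (auxQ r b s))
      ((2 * (b.1 * a.1 + b.2 * a.2) * r - 2 * (r * a.1) * b.1) / r ^ 2) 0 := by
    have hnum : HasDerivAt (fun s => 2 * auxP r a b s) (2 * (b.1 * a.1 + b.2 * a.2)) 0 :=
      (auxP_hasDeriv r a b).const_mul 2
    have := hnum.fun_div (auxsqrt r hr b) (by rw [hs0]; exact hr.ne')
    rw [hs0] at this
    simpa [hP0] using this
  have := hφQ.fun_mul hdiv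
  unfold auxH2
  refine this.congr_deriv ?_
  rw [hs0, hP0]
  field_simp
  ring

set_option maxHeartbeats 1000000

lemma bd_comb (ε : ℝ) (hε : ε ≠ 0) (F t s : ℝ) (u v : ℤ → ℝ × ℝ) (ℓ : ℤ) :
    bd ε (fun m => yLin ε F m + t • u m + s • v m) ℓ
      = (F, (0 : ℝ)) + t • bd ε u ℓ + s • bd ε v ℓ := by
  unfold bd yLin
  rw [Prod.ext_iff]
  constructor <;>
    [skip; skip] <;>
    simp only [Prod.smul_fst, Prod.smul_snd, Prod.fst_sub, Prod.snd_sub, Prod.fst_add,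
      Prod.snd_add, smul_eq_mul] <;>
    push_cast <;> field_simp <;> ring

lemma pair_sum (F t s : ℝ) (a₁ a₂ b₁ b₂ : ℝ × ℝ) :
    ((F, (0 : ℝ)) + t • a₁ + s • b₁) + ((F, (0 : ℝ)) + t • a₂ + s • b₂)
      = (2 * F, (0 : ℝ)) + t • (a₁ + a₂) + s • (b₁ + b₂) := by
  rw [Prod.ext_iff]
  constructor <;>
    simp only [Prod.smul_fst, Prod.smul_snd, Prod.fst_add, Prod.snd_add, smul_eq_mul] <;> ring

lemma Ea_expand (N : ℕ) (ε : ℝ) (hε : ε ≠ 0) (φ : ℝ → ℝ) (F t s : ℝ) (u v : ℤ → ℝ × ℝ) :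
    Ea N ε φ (fun m => yLin ε F m + t • u m + s • v m)
      = ε * ∑ ℓ ∈ Finset.Icc (1 : ℤ) (N : ℤ),
        (φ (enorm2 ((F, (0 : ℝ)) + t • bd ε u ℓ + s • bd ε v ℓ))
          + φ (enorm2 ((2 * F, (0 : ℝ)) + t • (bd ε u (ℓ + 1) + bd ε u ℓ)
              + s • (bd ε v (ℓ + 1) + bd ε v ℓ)))) := by
  unfold Ea
  congr 1
  apply Finset.sum_congr rfl
  intro ℓ _
  rw [bd_comb ε hε F t s u v ℓ, bd_comb ε hε F t s u v (ℓ + 1), pair_sum]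

lemma ECB_expand (N : ℕ) (ε : ℝ) (hε : ε ≠ 0) (φ : ℝ → ℝ) (F t s : ℝ) (u v : ℤ → ℝ × ℝ) :
    ECB N ε φ (fun m => yLin ε F m + t • u m + s • v m)
      = ε * ∑ ℓ ∈ Finset.Icc (1 : ℤ) (N : ℤ),
        (φ (enorm2 ((F, (0 : ℝ)) + t • bd ε u ℓ + s • bd ε v ℓ))
          + φ (2 * enorm2 ((F, (0 : ℝ)) + t • bd ε u ℓ + s • bd ε v ℓ))) := by
  unfold ECB
  congr 1
  apply Finset.sum_congr rfl
  intro ℓ _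
  rw [bd_comb ε hε F t s u v ℓ]


lemma d2Ea_eq (N : ℕ) (ε : ℝ) (hε : 0 < ε) (φ : ℝ → ℝ)
    (hφ1 : ∀ x, 0 < x → HasDerivAt φ (deriv φ x) x)
    (hφ2 : ∀ x, 0 < x → HasDerivAt (deriv φ) (deriv (deriv φ) x) x)
    (F : ℝ) (hF : 0 < F) (u v : ℤ → ℝ × ℝ) :
    d2E (Ea N ε φ) (yLin ε F) u v = ε * ∑ ℓ ∈ Finset.Icc (1 : ℤ) (N : ℤ),
      ((deriv (deriv φ) F * ((bd ε u ℓ).1 * (bd ε v ℓ).1)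
          + deriv φ F * ((bd ε u ℓ).2 * (bd ε v ℓ).2) / F)
        + (deriv (deriv φ) (2 * F) * ((bd ε u (ℓ + 1) + bd ε u ℓ).1 * (bd ε v (ℓ + 1) + bd ε v ℓ).1)
          + deriv φ (2 * F) * ((bd ε u (ℓ + 1) + bd ε u ℓ).2 * (bd ε v (ℓ + 1) + bd ε v ℓ).2)
              / (2 * F))) := by
  unfold d2E
  have hfun : (fun s : ℝ => deriv (fun t : ℝ =>
        Ea N ε φ (fun m => yLin ε F m + t • u m + s • v m)) 0)
      = fun s : ℝ => deriv (fun t : ℝ => ε * ∑ ℓ ∈ Finset.Icc (1 : ℤ) (N : ℤ),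
          (φ (enorm2 ((F, (0 : ℝ)) + t • bd ε u ℓ + s • bd ε v ℓ))
            + φ (enorm2 ((2 * F, (0 : ℝ)) + t • (bd ε u (ℓ + 1) + bd ε u ℓ)
                + s • (bd ε v (ℓ + 1) + bd ε v ℓ))))) 0 := by
    funext s
    congr 1
    funext t
    exact Ea_expand N ε hε.ne' φ F t s u v
  rw [hfun]
  have hev : ∀ᶠ s in nhds (0 : ℝ), ∀ ℓ ∈ Finset.Icc (1 : ℤ) (N : ℤ),
      0 < auxQ F (bd ε v ℓ) s ∧ 0 < auxQ (2 * F) (bd ε v (ℓ + 1) + bd ε v ℓ) s := by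
    rw [Filter.eventually_all_finset]
    intro ℓ _
    exact (auxQ_pos_eventually F hF _).and (auxQ_pos_eventually (2 * F) (by positivity) _)
  have hev2 : (fun s : ℝ => deriv (fun t : ℝ => ε * ∑ ℓ ∈ Finset.Icc (1 : ℤ) (N : ℤ),
          (φ (enorm2 ((F, (0 : ℝ)) + t • bd ε u ℓ + s • bd ε v ℓ))
            + φ (enorm2 ((2 * F, (0 : ℝ)) + t • (bd ε u (ℓ + 1) + bd ε u ℓ)
                + s • (bd ε v (ℓ + 1) + bd ε v ℓ))))) 0)
      =ᶠ[nhds (0 : ℝ)] fun s : ℝ => ε * ∑ ℓ ∈ Finset.Icc (1 : ℤ) (N : ℤ),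
          (auxH φ F (bd ε u ℓ) (bd ε v ℓ) s
            + auxH φ (2 * F) (bd ε u (ℓ + 1) + bd ε u ℓ) (bd ε v (ℓ + 1) + bd ε v ℓ) s) := by
    filter_upwards [hev] with s hs
    exact (HasDerivAt.const_mul ε (HasDerivAt.fun_sum fun ℓ hℓ =>
      ((aux_hasDerivAt_t hφ1 F (bd ε u ℓ) (bd ε v ℓ) s (hs ℓ hℓ).1).fun_add
        (aux_hasDerivAt_t hφ1 (2 * F) (bd ε u (ℓ + 1) + bd ε u ℓ)
          (bd ε v (ℓ + 1) + bd ε v ℓ) s (hs ℓ hℓ).2)))).deriv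
  rw [hev2.deriv_eq]
  exact (HasDerivAt.const_mul ε (HasDerivAt.fun_sum fun ℓ _ =>
    ((auxH_hasDerivAt hφ2 F hF (bd ε u ℓ) (bd ε v ℓ)).fun_add
      (auxH_hasDerivAt hφ2 (2 * F) (by positivity) (bd ε u (ℓ + 1) + bd ε u ℓ)
        (bd ε v (ℓ + 1) + bd ε v ℓ))))).deriv

lemma d2ECB_eq (N : ℕ) (ε : ℝ) (hε : 0 < ε) (φ : ℝ → ℝ)
    (hφ1 : ∀ x, 0 < x → HasDerivAt φ (deriv φ x) x)
    (hφ2 : ∀ x, 0 < x → HasDerivAt (deriv φ) (deriv (deriv φ) x) x)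
    (F : ℝ) (hF : 0 < F) (u v : ℤ → ℝ × ℝ) :
    d2E (ECB N ε φ) (yLin ε F) u v = ε * ∑ ℓ ∈ Finset.Icc (1 : ℤ) (N : ℤ),
      ((deriv (deriv φ) F * ((bd ε u ℓ).1 * (bd ε v ℓ).1)
          + deriv φ F * ((bd ε u ℓ).2 * (bd ε v ℓ).2) / F)
        + (4 * deriv (deriv φ) (2 * F) * ((bd ε u ℓ).1 * (bd ε v ℓ).1)
          + 2 * deriv φ (2 * F) * ((bd ε u ℓ).2 * (bd ε v ℓ).2) / F)) := by
  unfold d2E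
  have hfun : (fun s : ℝ => deriv (fun t : ℝ =>
        ECB N ε φ (fun m => yLin ε F m + t • u m + s • v m)) 0)
      = fun s : ℝ => deriv (fun t : ℝ => ε * ∑ ℓ ∈ Finset.Icc (1 : ℤ) (N : ℤ),
          (φ (enorm2 ((F, (0 : ℝ)) + t • bd ε u ℓ + s • bd ε v ℓ))
            + φ (2 * enorm2 ((F, (0 : ℝ)) + t • bd ε u ℓ + s • bd ε v ℓ)))) 0 := by
    funext s
    congr 1
    funext t
    exact ECB_expand N ε hε.ne' φ F t s u v
  rw [hfun]
  have hev : ∀ᶠ s in nhds (0 : ℝ), ∀ ℓ ∈ Finset.Icc (1 : ℤ) (N : ℤ),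
      0 < auxQ F (bd ε v ℓ) s := by
    rw [Filter.eventually_all_finset]
    intro ℓ _
    exact auxQ_pos_eventually F hF _
  have hev2 : (fun s : ℝ => deriv (fun t : ℝ => ε * ∑ ℓ ∈ Finset.Icc (1 : ℤ) (N : ℤ),
          (φ (enorm2 ((F, (0 : ℝ)) + t • bd ε u ℓ + s • bd ε v ℓ))
            + φ (2 * enorm2 ((F, (0 : ℝ)) + t • bd ε u ℓ + s • bd ε v ℓ)))) 0)
      =ᶠ[nhds (0 : ℝ)] fun s : ℝ => ε * ∑ ℓ ∈ Finset.Icc (1 : ℤ) (N : ℤ),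
          (auxH φ F (bd ε u ℓ) (bd ε v ℓ) s + auxH2 φ F (bd ε u ℓ) (bd ε v ℓ) s) := by
    filter_upwards [hev] with s hs
    exact (HasDerivAt.const_mul ε (HasDerivAt.fun_sum fun ℓ hℓ =>
      ((aux_hasDerivAt_t hφ1 F (bd ε u ℓ) (bd ε v ℓ) s (hs ℓ hℓ)).fun_add
        (aux_hasDerivAt_t2 hφ1 F (bd ε u ℓ) (bd ε v ℓ) s (hs ℓ hℓ))))).deriv
  rw [hev2.deriv_eq]
  exact (HasDerivAt.const_mul ε (HasDerivAt.fun_sum fun ℓ _ =>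
    ((auxH_hasDerivAt hφ2 F hF (bd ε u ℓ) (bd ε v ℓ)).fun_add
      (auxH2_hasDerivAt hφ2 F hF (bd ε u ℓ) (bd ε v ℓ))))).deriv

lemma dEa_eq (N : ℕ) (ε : ℝ) (hε : 0 < ε) (φ : ℝ → ℝ)
    (hφ1 : ∀ x, 0 < x → HasDerivAt φ (deriv φ x) x)
    (F : ℝ) (hF : 0 < F) (v : ℤ → ℝ × ℝ) :
    dE (Ea N ε φ) (yLin ε F) v = ε * ∑ ℓ ∈ Finset.Icc (1 : ℤ) (N : ℤ),
      (deriv φ F * (bd ε v ℓ).1 + deriv φ (2 * F) * (bd ε v (ℓ + 1) + bd ε v ℓ).1) := by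
  unfold dE
  have hfun : (fun t : ℝ => Ea N ε φ (fun m => yLin ε F m + t • v m))
      = fun t : ℝ => ε * ∑ ℓ ∈ Finset.Icc (1 : ℤ) (N : ℤ),
          (φ (enorm2 ((F, (0 : ℝ)) + t • bd ε v ℓ + (0 : ℝ) • bd ε v ℓ))
            + φ (enorm2 ((2 * F, (0 : ℝ)) + t • (bd ε v (ℓ + 1) + bd ε v ℓ)
                + (0 : ℝ) • (bd ε v (ℓ + 1) + bd ε v ℓ)))) := by
    funext t
    have : (fun m => yLin ε F m + t • v m)
        = fun m => yLin ε F m + t • v m + (0 : ℝ) • v m := by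
      funext m; simp
    rw [this]
    exact Ea_expand N ε hε.ne' φ F t 0 v v
  rw [hfun]
  have hQ1 : ∀ b : ℝ × ℝ, (0:ℝ) < auxQ F b 0 := by intro b; simp [auxQ]; positivity
  have hQ2 : ∀ b : ℝ × ℝ, (0:ℝ) < auxQ (2 * F) b 0 := by
    intro b; simp [auxQ]; positivity
  rw [(HasDerivAt.const_mul ε (HasDerivAt.fun_sum fun ℓ _ =>
    ((aux_hasDerivAt_t hφ1 F (bd ε v ℓ) (bd ε v ℓ) 0 (hQ1 _)).fun_add
      (aux_hasDerivAt_t hφ1 (2 * F) (bd ε v (ℓ + 1) + bd ε v ℓ)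
        (bd ε v (ℓ + 1) + bd ε v ℓ) 0 (hQ2 _))))).deriv]
  congr 1
  apply Finset.sum_congr rfl
  intro ℓ _
  rw [auxH_zero F hF, auxH_zero (2 * F) (by positivity)]

lemma dECB_eq (N : ℕ) (ε : ℝ) (hε : 0 < ε) (φ : ℝ → ℝ)
    (hφ1 : ∀ x, 0 < x → HasDerivAt φ (deriv φ x) x)
    (F : ℝ) (hF : 0 < F) (v : ℤ → ℝ × ℝ) :
    dE (ECB N ε φ) (yLin ε F) v = ε * ∑ ℓ ∈ Finset.Icc (1 : ℤ) (N : ℤ),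
      (deriv φ F * (bd ε v ℓ).1 + deriv φ (2 * F) * (2 * (bd ε v ℓ).1)) := by
  unfold dE
  have hfun : (fun t : ℝ => ECB N ε φ (fun m => yLin ε F m + t • v m))
      = fun t : ℝ => ε * ∑ ℓ ∈ Finset.Icc (1 : ℤ) (N : ℤ),
          (φ (enorm2 ((F, (0 : ℝ)) + t • bd ε v ℓ + (0 : ℝ) • bd ε v ℓ))
            + φ (2 * enorm2 ((F, (0 : ℝ)) + t • bd ε v ℓ + (0 : ℝ) • bd ε v ℓ))) := by
    funext t
    have : (fun m => yLin ε F m + t • v m)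
        = fun m => yLin ε F m + t • v m + (0 : ℝ) • v m := by
      funext m; simp
    rw [this]
    exact ECB_expand N ε hε.ne' φ F t 0 v v
  rw [hfun]
  have hQ1 : ∀ b : ℝ × ℝ, (0:ℝ) < auxQ F b 0 := by intro b; simp [auxQ]; positivity
  rw [(HasDerivAt.const_mul ε (HasDerivAt.fun_sum fun ℓ _ =>
    ((aux_hasDerivAt_t hφ1 F (bd ε v ℓ) (bd ε v ℓ) 0 (hQ1 _)).fun_add
      (aux_hasDerivAt_t2 hφ1 F (bd ε v ℓ) (bd ε v ℓ) 0 (hQ1 _))))).deriv]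
  congr 1
  apply Finset.sum_congr rfl
  intro ℓ _
  rw [auxH_zero F hF, auxH2_zero F hF]

lemma aux_sum_id (N : ℕ) (hN : 1 ≤ N) (a b : ℤ → ℝ) (ha : ∀ ℓ, a (ℓ + (N : ℤ)) = a ℓ)
    (hb : ∀ ℓ, b (ℓ + (N : ℤ)) = b ℓ) :
    ∑ ℓ ∈ Finset.Icc (1 : ℤ) (N : ℤ),
        (4 * a ℓ * b ℓ - (a (ℓ + 1) + a ℓ) * (b (ℓ + 1) + b ℓ))
      = -∑ ℓ ∈ Finset.Icc (1 : ℤ) (N : ℤ), (a (ℓ + 1) - 2 * a ℓ + a (ℓ - 1)) * b ℓ := by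
  have h1 := aux_sum_shift N hN (fun ℓ => a ℓ * b ℓ) (fun ℓ => by simp [ha, hb])
  have h2 := aux_sum_shift N hN (fun ℓ => a (ℓ - 1) * b ℓ) (fun ℓ => by
    rw [show ℓ + (N : ℤ) - 1 = ℓ - 1 + N by ring, ha, hb])
  simp only [add_sub_cancel_right] at h1 h2 ⊢
  have key : ∑ ℓ ∈ Finset.Icc (1 : ℤ) (N : ℤ),
        ((4 * a ℓ * b ℓ - (a (ℓ + 1) + a ℓ) * (b (ℓ + 1) + b ℓ))
          + (a (ℓ + 1) - 2 * a ℓ + a (ℓ - 1)) * b ℓ)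
      = ∑ ℓ ∈ Finset.Icc (1 : ℤ) (N : ℤ),
        ((a ℓ * b ℓ - a (ℓ + 1) * b (ℓ + 1)) + (a (ℓ - 1) * b ℓ - a ℓ * b (ℓ + 1))) :=
    Finset.sum_congr rfl (fun ℓ _ => by ring)
  rw [Finset.sum_add_distrib, Finset.sum_add_distrib] at key
  simp only [Finset.sum_sub_distrib] at key ⊢
  linarith [h1, h2, key]

lemma bd_per (ε : ℝ) (N : ℕ) (u : ℤ → ℝ × ℝ) (hu : ∀ ℓ, u (ℓ + (N : ℤ)) = u ℓ) :
    ∀ ℓ, bd ε u (ℓ + (N : ℤ)) = bd ε u ℓ := by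
  intro ℓ
  simp only [bd]
  rw [hu, show ℓ + (N : ℤ) - 1 = ℓ - 1 + N by ring, hu]

lemma bd_sub (ε : ℝ) (x y : ℤ → ℝ × ℝ) (ℓ : ℤ) :
    bd ε (fun m => x m - y m) ℓ = bd ε x ℓ - bd ε y ℓ := by
  simp only [bd, ← smul_sub]
  congr 1
  abel

lemma bd3 (ε : ℝ) (hε : ε ≠ 0) (u : ℤ → ℝ × ℝ) (ℓ : ℤ) :
    ((bd ε u (ℓ + 1)).1 - 2 * (bd ε u ℓ).1 + (bd ε u (ℓ - 1)).1
        = ε ^ 2 * (bd ε (bd ε (bd ε u)) (ℓ + 1)).1)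
    ∧ ((bd ε u (ℓ + 1)).2 - 2 * (bd ε u ℓ).2 + (bd ε u (ℓ - 1)).2
        = ε ^ 2 * (bd ε (bd ε (bd ε u)) (ℓ + 1)).2) := by
  constructor <;>
  · simp only [bd, Prod.smul_fst, Prod.smul_snd, Prod.fst_sub, Prod.snd_sub, smul_eq_mul,
      add_sub_cancel_right]
    field_simp
    ring

lemma aux_CS (s : Finset ℤ) (f g : ℤ → ℝ) (hf : ∀ i ∈ s, 0 ≤ f i) (hg : ∀ i ∈ s, 0 ≤ g i) :
    ∑ i ∈ s, f i * g i ≤ Real.sqrt (∑ i ∈ s, f i ^ 2) * Real.sqrt (∑ i ∈ s, g i ^ 2) := by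
  rw [← Real.sqrt_mul (by positivity)]
  exact Real.le_sqrt_of_sq_le (Finset.sum_mul_sq_le_sq_mul_sq s f g)

lemma enorm2_nonneg (z : ℝ × ℝ) : 0 ≤ enorm2 z := Real.sqrt_nonneg _

lemma enorm2_sq (z : ℝ × ℝ) : enorm2 z ^ 2 = z.1 ^ 2 + z.2 ^ 2 :=
  Real.sq_sqrt (by positivity)

lemma aux_ptwise (c₁ c₂ M : ℝ) (h1 : |c₁| ≤ M) (h2 : |c₂| ≤ M) (x y : ℝ × ℝ) :
    |c₁ * (x.1 * y.1) + c₂ * (x.2 * y.2)| ≤ M * (enorm2 x * enorm2 y) := by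
  have hM : 0 ≤ M := le_trans (abs_nonneg _) h1
  have key : |x.1 * y.1| + |x.2 * y.2| ≤ enorm2 x * enorm2 y := by
    have hx : enorm2 x * enorm2 y = Real.sqrt ((x.1 ^ 2 + x.2 ^ 2) * (y.1 ^ 2 + y.2 ^ 2)) := by
      rw [Real.sqrt_mul (by positivity)]; rfl
    rw [hx]
    apply Real.le_sqrt_of_sq_le
    rw [abs_mul, abs_mul]
    have expand : (x.1 ^ 2 + x.2 ^ 2) * (y.1 ^ 2 + y.2 ^ 2)
        - (|x.1| * |y.1| + |x.2| * |y.2|) ^ 2 = (|x.1| * |y.2| - |x.2| * |y.1|) ^ 2 := by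
      rw [← sq_abs x.1, ← sq_abs x.2, ← sq_abs y.1, ← sq_abs y.2]; ring
    linarith [sq_nonneg (|x.1| * |y.2| - |x.2| * |y.1|), expand]
  calc |c₁ * (x.1 * y.1) + c₂ * (x.2 * y.2)|
      ≤ |c₁ * (x.1 * y.1)| + |c₂ * (x.2 * y.2)| := abs_add_le _ _
    _ = |c₁| * (|x.1| * |y.1|) + |c₂| * (|x.2| * |y.2|) := by simp [abs_mul]
    _ ≤ M * (|x.1| * |y.1|) + M * (|x.2| * |y.2|) :=
        add_le_add (mul_le_mul_of_nonneg_right h1 (by positivity))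
          (mul_le_mul_of_nonneg_right h2 (by positivity))
    _ = M * (|x.1 * y.1| + |x.2 * y.2|) := by rw [abs_mul, abs_mul]; ring
    _ ≤ M * (enorm2 x * enorm2 y) := mul_le_mul_of_nonneg_left key hM

lemma sum_bd_fst (N : ℕ) (hN : 1 ≤ N) (ε : ℝ) (v : ℤ → ℝ × ℝ)
    (hv : ∀ ℓ, v (ℓ + (N : ℤ)) = v ℓ) :
    ∑ ℓ ∈ Finset.Icc (1 : ℤ) (N : ℤ), (bd ε v ℓ).1 = 0 := by
  have hsh := aux_sum_shift N hN (fun ℓ => (v (ℓ - 1)).1) (fun ℓ => by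
    rw [show ℓ + (N : ℤ) - 1 = ℓ - 1 + N by ring, hv])
  simp only [add_sub_cancel_right] at hsh
  have : ∀ ℓ : ℤ, (bd ε v ℓ).1 = ε⁻¹ * ((v ℓ).1 - (v (ℓ - 1)).1) := by
    intro ℓ; simp [bd]
  rw [Finset.sum_congr rfl (fun ℓ _ => this ℓ), ← Finset.mul_sum, Finset.sum_sub_distrib, hsh]
  simp

lemma nrm_nonneg (N : ℕ) (ε : ℝ) (v : ℤ → ℝ × ℝ) : 0 ≤ nrm N ε v := Real.sqrt_nonneg _

theorem stmt_12 (N : ℕ) (hN : 4 ≤ N) (ε : ℝ) (hε : ε = (N : ℝ)⁻¹)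
    (φ : ℝ → ℝ) (hφ : ContDiffOn ℝ 2 φ (Set.Ioi 0)) (F : ℝ) (hF : 0 < F)
    (hγ : 0 < min (deriv (deriv φ) F + 4 * deriv (deriv φ) (2 * F))
      ((deriv φ F + 2 * deriv φ (2 * F)) / F))
    (f ua uCB : ℤ → ℝ × ℝ) (hf : IsDisp N f) (hua : IsDisp N ua) (huCB : IsDisp N uCB)
    (heqa : ∀ v : ℤ → ℝ × ℝ, IsDisp N v →
      dE (Ea N ε φ) (yLin ε F) v + d2E (Ea N ε φ) (yLin ε F) ua v = ip N ε f v)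
    (heqCB : ∀ v : ℤ → ℝ × ℝ, IsDisp N v →
      dE (ECB N ε φ) (yLin ε F) v + d2E (ECB N ε φ) (yLin ε F) uCB v = ip N ε f v) :
    nrm N ε (bd ε (fun ℓ => ua ℓ - uCB ℓ)) ≤
      ε ^ 2 * max |deriv (deriv φ) (2 * F)| |deriv φ (2 * F) / (2 * F)| /
        min (deriv (deriv φ) F + 4 * deriv (deriv φ) (2 * F))
          ((deriv φ F + 2 * deriv φ (2 * F)) / F) *
        nrm N ε (bd ε (bd ε (bd ε ua))) := by
  have hN1 : 1 ≤ N := by omega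
  have hNR : (0 : ℝ) < (N : ℝ) := by exact_mod_cast (by omega : 0 < N)
  have hε0 : (0 : ℝ) < ε := by rw [hε]; exact inv_pos.2 hNR
  have hφ1 : ∀ x, 0 < x → HasDerivAt φ (deriv φ x) x := fun x hx =>
    ((hφ.differentiableOn (by norm_num)).differentiableAt (isOpen_Ioi.mem_nhds hx)).hasDerivAt
  have hd2 : ContDiffOn ℝ 1 (deriv φ) (Set.Ioi 0) :=
    hφ.deriv_of_isOpen isOpen_Ioi (by norm_num)
  have hφ2 : ∀ x, 0 < x → HasDerivAt (deriv φ) (deriv (deriv φ) x) x := fun x hx =>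
    ((hd2.differentiableOn (by norm_num)).differentiableAt (isOpen_Ioi.mem_nhds hx)).hasDerivAt
  set w : ℤ → ℝ × ℝ := fun ℓ => ua ℓ - uCB ℓ with hw
  have hwdisp : IsDisp N w := by
    constructor
    · intro ℓ; simp only [hw]; rw [hua.1 ℓ, huCB.1 ℓ]
    · simp only [hw]; rw [Finset.sum_sub_distrib, hua.2, huCB.2, sub_zero]
  have hwper := hwdisp.1
  have hbper := bd_per ε N w hwper
  have haper := bd_per ε N ua hua.1
  have hdper := bd_per ε N (bd ε (bd ε ua)) (bd_per ε N (bd ε ua) haper)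
  have hddper := bd_per ε N (bd ε (bd ε (bd ε ua))) hdper
  -- first variations vanish on w
  have hSb : ∑ ℓ ∈ Finset.Icc (1 : ℤ) (N : ℤ), (bd ε w ℓ).1 = 0 := sum_bd_fst N hN1 ε w hwper
  have hSbsh : ∑ ℓ ∈ Finset.Icc (1 : ℤ) (N : ℤ), (bd ε w (ℓ + 1)).1
      = ∑ ℓ ∈ Finset.Icc (1 : ℤ) (N : ℤ), (bd ε w ℓ).1 :=
    aux_sum_shift N hN1 (fun ℓ => (bd ε w ℓ).1) (fun ℓ => by rw [hbper ℓ])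
  have hdEa : dE (Ea N ε φ) (yLin ε F) w = 0 := by
    rw [dEa_eq N ε hε0 φ hφ1 F hF w]
    have hcongr : ∀ ℓ ∈ Finset.Icc (1 : ℤ) (N : ℤ),
        deriv φ F * (bd ε w ℓ).1 + deriv φ (2 * F) * (bd ε w (ℓ + 1) + bd ε w ℓ).1
          = deriv φ F * (bd ε w ℓ).1
            + (deriv φ (2 * F) * (bd ε w (ℓ + 1)).1 + deriv φ (2 * F) * (bd ε w ℓ).1) := by
      intro ℓ _; rw [Prod.fst_add]; ring
    rw [Finset.sum_congr rfl hcongr, Finset.sum_add_distrib, Finset.sum_add_distrib,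
      ← Finset.mul_sum, ← Finset.mul_sum, ← Finset.mul_sum, hSb, hSbsh, hSb]
    simp
  have hdECB : dE (ECB N ε φ) (yLin ε F) w = 0 := by
    rw [dECB_eq N ε hε0 φ hφ1 F hF w]
    have hcongr : ∀ ℓ ∈ Finset.Icc (1 : ℤ) (N : ℤ),
        deriv φ F * (bd ε w ℓ).1 + deriv φ (2 * F) * (2 * (bd ε w ℓ).1)
          = (deriv φ F + 2 * deriv φ (2 * F)) * (bd ε w ℓ).1 := by
      intro ℓ _; ring
    rw [Finset.sum_congr rfl hcongr, ← Finset.mul_sum, hSb, mul_zero, mul_zero]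
  -- the two Euler--Lagrange equations at w
  have hEAeq := heqa w hwdisp
  have hECBeq := heqCB w hwdisp
  rw [hdEa, zero_add] at hEAeq
  rw [hdECB, zero_add] at hECBeq
  have hmain : d2E (Ea N ε φ) (yLin ε F) ua w = d2E (ECB N ε φ) (yLin ε F) uCB w := by
    rw [hEAeq, hECBeq]
  rw [d2Ea_eq N ε hε0 φ hφ1 hφ2 F hF ua w, d2ECB_eq N ε hε0 φ hφ1 hφ2 F hF uCB w] at hmain
  have hmain' := mul_left_cancel₀ hε0.ne' hmain
  -- abbreviations
  set dd := bd ε (bd ε (bd ε ua)) with hdd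
  set A1 := deriv (deriv φ) F with hA1
  set A2 := deriv (deriv φ) (2 * F) with hA2
  set p1 := deriv φ F with hp1
  set p2 := deriv φ (2 * F) with hp2
  set M := max |A2| |p2 / (2 * F)| with hM
  set γ := min (A1 + 4 * A2) ((p1 + 2 * p2) / F) with hγd
  set X := nrm N ε (bd ε w) with hX
  set Y := nrm N ε dd with hY
  have hXsq : X ^ 2 = ε * ∑ ℓ ∈ Finset.Icc (1 : ℤ) (N : ℤ), enorm2 (bd ε w ℓ) ^ 2 := by
    rw [hX, nrm]
    refine Real.sq_sqrt (mul_nonneg hε0.le ?_)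
    exact Finset.sum_nonneg fun ℓ _ => sq_nonneg _
  have hYeq : Y = Real.sqrt ε * Real.sqrt (∑ ℓ ∈ Finset.Icc (1 : ℤ) (N : ℤ), enorm2 (dd ℓ) ^ 2) := by
    rw [hY, nrm, Real.sqrt_mul hε0.le]
  have hXeq : X = Real.sqrt ε * Real.sqrt (∑ ℓ ∈ Finset.Icc (1 : ℤ) (N : ℤ), enorm2 (bd ε w ℓ) ^ 2) := by
    rw [hX, nrm, Real.sqrt_mul hε0.le]
  have hMnn : 0 ≤ M := le_trans (abs_nonneg _) (le_max_left _ _)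
  -- coercivity
  have c0 : γ * X ^ 2 ≤ ε * ∑ ℓ ∈ Finset.Icc (1 : ℤ) (N : ℤ),
      ((A1 * ((bd ε w ℓ).1 * (bd ε w ℓ).1) + p1 * ((bd ε w ℓ).2 * (bd ε w ℓ).2) / F)
        + (4 * A2 * ((bd ε w ℓ).1 * (bd ε w ℓ).1)
          + 2 * p2 * ((bd ε w ℓ).2 * (bd ε w ℓ).2) / F)) := by
    rw [hXsq, mul_left_comm]
    refine mul_le_mul_of_nonneg_left ?_ hε0.le
    rw [Finset.mul_sum]
    refine Finset.sum_le_sum fun ℓ _ => ?_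
    rw [enorm2_sq]
    have k1 : γ * (bd ε w ℓ).1 ^ 2 ≤ (A1 + 4 * A2) * (bd ε w ℓ).1 ^ 2 :=
      mul_le_mul_of_nonneg_right (min_le_left _ _) (sq_nonneg _)
    have k2 : γ * (bd ε w ℓ).2 ^ 2 ≤ ((p1 + 2 * p2) / F) * (bd ε w ℓ).2 ^ 2 :=
      mul_le_mul_of_nonneg_right (min_le_right _ _) (sq_nonneg _)
    have e1 : (A1 * ((bd ε w ℓ).1 * (bd ε w ℓ).1) + p1 * ((bd ε w ℓ).2 * (bd ε w ℓ).2) / F)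
        + (4 * A2 * ((bd ε w ℓ).1 * (bd ε w ℓ).1)
          + 2 * p2 * ((bd ε w ℓ).2 * (bd ε w ℓ).2) / F)
        = (A1 + 4 * A2) * (bd ε w ℓ).1 ^ 2 + ((p1 + 2 * p2) / F) * (bd ε w ℓ).2 ^ 2 := by
      field_simp; ring
    rw [e1]
    linarith [k1, k2]
  -- bilinearity splitting
  have hbsub1 : ∀ ℓ : ℤ, (bd ε w ℓ).1 = (bd ε ua ℓ).1 - (bd ε uCB ℓ).1 := fun ℓ => by
    rw [hw, bd_sub ε ua uCB ℓ, Prod.fst_sub]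
  have hbsub2 : ∀ ℓ : ℤ, (bd ε w ℓ).2 = (bd ε ua ℓ).2 - (bd ε uCB ℓ).2 := fun ℓ => by
    rw [hw, bd_sub ε ua uCB ℓ, Prod.snd_sub]
  have c1 : ∑ ℓ ∈ Finset.Icc (1 : ℤ) (N : ℤ),
      ((A1 * ((bd ε w ℓ).1 * (bd ε w ℓ).1) + p1 * ((bd ε w ℓ).2 * (bd ε w ℓ).2) / F)
        + (4 * A2 * ((bd ε w ℓ).1 * (bd ε w ℓ).1)
          + 2 * p2 * ((bd ε w ℓ).2 * (bd ε w ℓ).2) / F))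
      = (∑ ℓ ∈ Finset.Icc (1 : ℤ) (N : ℤ),
          ((A1 * ((bd ε ua ℓ).1 * (bd ε w ℓ).1) + p1 * ((bd ε ua ℓ).2 * (bd ε w ℓ).2) / F)
            + (4 * A2 * ((bd ε ua ℓ).1 * (bd ε w ℓ).1)
              + 2 * p2 * ((bd ε ua ℓ).2 * (bd ε w ℓ).2) / F)))
        - ∑ ℓ ∈ Finset.Icc (1 : ℤ) (N : ℤ),
          ((A1 * ((bd ε uCB ℓ).1 * (bd ε w ℓ).1) + p1 * ((bd ε uCB ℓ).2 * (bd ε w ℓ).2) / F)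
            + (4 * A2 * ((bd ε uCB ℓ).1 * (bd ε w ℓ).1)
              + 2 * p2 * ((bd ε uCB ℓ).2 * (bd ε w ℓ).2) / F)) := by
    rw [← Finset.sum_sub_distrib]
    refine Finset.sum_congr rfl fun ℓ _ => ?_
    rw [hbsub1 ℓ, hbsub2 ℓ]
    ring
  -- consistency
  have c3 : (∑ ℓ ∈ Finset.Icc (1 : ℤ) (N : ℤ),
        ((A1 * ((bd ε ua ℓ).1 * (bd ε w ℓ).1) + p1 * ((bd ε ua ℓ).2 * (bd ε w ℓ).2) / F)
          + (4 * A2 * ((bd ε ua ℓ).1 * (bd ε w ℓ).1)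
            + 2 * p2 * ((bd ε ua ℓ).2 * (bd ε w ℓ).2) / F)))
      - ∑ ℓ ∈ Finset.Icc (1 : ℤ) (N : ℤ),
        ((A1 * ((bd ε ua ℓ).1 * (bd ε w ℓ).1) + p1 * ((bd ε ua ℓ).2 * (bd ε w ℓ).2) / F)
          + (A2 * ((bd ε ua (ℓ + 1) + bd ε ua ℓ).1 * (bd ε w (ℓ + 1) + bd ε w ℓ).1)
            + p2 * ((bd ε ua (ℓ + 1) + bd ε ua ℓ).2 * (bd ε w (ℓ + 1) + bd ε w ℓ).2) / (2 * F)))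
      = ∑ ℓ ∈ Finset.Icc (1 : ℤ) (N : ℤ),
        (A2 * (4 * (bd ε ua ℓ).1 * (bd ε w ℓ).1
            - ((bd ε ua (ℓ + 1)).1 + (bd ε ua ℓ).1) * ((bd ε w (ℓ + 1)).1 + (bd ε w ℓ).1))
          + p2 / (2 * F) * (4 * (bd ε ua ℓ).2 * (bd ε w ℓ).2
            - ((bd ε ua (ℓ + 1)).2 + (bd ε ua ℓ).2) * ((bd ε w (ℓ + 1)).2 + (bd ε w ℓ).2))) := by
    rw [← Finset.sum_sub_distrib]
    refine Finset.sum_congr rfl fun ℓ _ => ?_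
    rw [Prod.fst_add, Prod.snd_add, Prod.fst_add, Prod.snd_add]
    field_simp
    ring
  have c4 : ∑ ℓ ∈ Finset.Icc (1 : ℤ) (N : ℤ),
        (A2 * (4 * (bd ε ua ℓ).1 * (bd ε w ℓ).1
            - ((bd ε ua (ℓ + 1)).1 + (bd ε ua ℓ).1) * ((bd ε w (ℓ + 1)).1 + (bd ε w ℓ).1))
          + p2 / (2 * F) * (4 * (bd ε ua ℓ).2 * (bd ε w ℓ).2
            - ((bd ε ua (ℓ + 1)).2 + (bd ε ua ℓ).2) * ((bd ε w (ℓ + 1)).2 + (bd ε w ℓ).2)))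
      = A2 * ∑ ℓ ∈ Finset.Icc (1 : ℤ) (N : ℤ),
          (4 * (bd ε ua ℓ).1 * (bd ε w ℓ).1
            - ((bd ε ua (ℓ + 1)).1 + (bd ε ua ℓ).1) * ((bd ε w (ℓ + 1)).1 + (bd ε w ℓ).1))
        + p2 / (2 * F) * ∑ ℓ ∈ Finset.Icc (1 : ℤ) (N : ℤ),
          (4 * (bd ε ua ℓ).2 * (bd ε w ℓ).2
            - ((bd ε ua (ℓ + 1)).2 + (bd ε ua ℓ).2) * ((bd ε w (ℓ + 1)).2 + (bd ε w ℓ).2)) := by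
    rw [Finset.sum_add_distrib, Finset.mul_sum, Finset.mul_sum]
  have c5a := aux_sum_id N hN1 (fun ℓ => (bd ε ua ℓ).1) (fun ℓ => (bd ε w ℓ).1)
    (fun ℓ => congrArg Prod.fst (haper ℓ)) (fun ℓ => congrArg Prod.fst (hbper ℓ))
  have c5b := aux_sum_id N hN1 (fun ℓ => (bd ε ua ℓ).2) (fun ℓ => (bd ε w ℓ).2)
    (fun ℓ => congrArg Prod.snd (haper ℓ)) (fun ℓ => congrArg Prod.snd (hbper ℓ))
  have c6a : ∑ ℓ ∈ Finset.Icc (1 : ℤ) (N : ℤ),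
        ((bd ε ua (ℓ + 1)).1 - 2 * (bd ε ua ℓ).1 + (bd ε ua (ℓ - 1)).1) * (bd ε w ℓ).1
      = ε ^ 2 * ∑ ℓ ∈ Finset.Icc (1 : ℤ) (N : ℤ), (dd (ℓ + 1)).1 * (bd ε w ℓ).1 := by
    rw [Finset.mul_sum]
    refine Finset.sum_congr rfl fun ℓ _ => ?_
    rw [hdd, (bd3 ε hε0.ne' ua ℓ).1]
    ring
  have c6b : ∑ ℓ ∈ Finset.Icc (1 : ℤ) (N : ℤ),
        ((bd ε ua (ℓ + 1)).2 - 2 * (bd ε ua ℓ).2 + (bd ε ua (ℓ - 1)).2) * (bd ε w ℓ).2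
      = ε ^ 2 * ∑ ℓ ∈ Finset.Icc (1 : ℤ) (N : ℤ), (dd (ℓ + 1)).2 * (bd ε w ℓ).2 := by
    rw [Finset.mul_sum]
    refine Finset.sum_congr rfl fun ℓ _ => ?_
    rw [hdd, (bd3 ε hε0.ne' ua ℓ).2]
    ring
  have c7 : A2 * (ε ^ 2 * ∑ ℓ ∈ Finset.Icc (1 : ℤ) (N : ℤ), (dd (ℓ + 1)).1 * (bd ε w ℓ).1)
        + p2 / (2 * F) * (ε ^ 2 * ∑ ℓ ∈ Finset.Icc (1 : ℤ) (N : ℤ), (dd (ℓ + 1)).2 * (bd ε w ℓ).2)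
      = ε ^ 2 * ∑ ℓ ∈ Finset.Icc (1 : ℤ) (N : ℤ),
          (A2 * ((dd (ℓ + 1)).1 * (bd ε w ℓ).1) + p2 / (2 * F) * ((dd (ℓ + 1)).2 * (bd ε w ℓ).2)) := by
    simp only [Finset.mul_sum]
    rw [← Finset.sum_add_distrib]
    refine Finset.sum_congr rfl fun ℓ _ => ?_
    ring
  -- absolute value and Cauchy-Schwarz
  have c8 : -(∑ ℓ ∈ Finset.Icc (1 : ℤ) (N : ℤ),
        (A2 * ((dd (ℓ + 1)).1 * (bd ε w ℓ).1) + p2 / (2 * F) * ((dd (ℓ + 1)).2 * (bd ε w ℓ).2)))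
      ≤ ∑ ℓ ∈ Finset.Icc (1 : ℤ) (N : ℤ), M * (enorm2 (dd (ℓ + 1)) * enorm2 (bd ε w ℓ)) := by
    rw [← Finset.sum_neg_distrib]
    refine Finset.sum_le_sum fun ℓ _ => ?_
    refine le_trans (neg_le_abs _) ?_
    exact aux_ptwise A2 (p2 / (2 * F)) M (le_max_left _ _) (le_max_right _ _) (dd (ℓ + 1)) (bd ε w ℓ)
  have c9 : ∑ ℓ ∈ Finset.Icc (1 : ℤ) (N : ℤ), M * (enorm2 (dd (ℓ + 1)) * enorm2 (bd ε w ℓ))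
      ≤ M * (Real.sqrt (∑ ℓ ∈ Finset.Icc (1 : ℤ) (N : ℤ), enorm2 (dd (ℓ + 1)) ^ 2)
          * Real.sqrt (∑ ℓ ∈ Finset.Icc (1 : ℤ) (N : ℤ), enorm2 (bd ε w ℓ) ^ 2)) := by
    rw [← Finset.mul_sum]
    refine mul_le_mul_of_nonneg_left ?_ hMnn
    exact aux_CS _ (fun ℓ => enorm2 (dd (ℓ + 1))) (fun ℓ => enorm2 (bd ε w ℓ))
      (fun ℓ _ => enorm2_nonneg _) (fun ℓ _ => enorm2_nonneg _)
  have c10 : ∑ ℓ ∈ Finset.Icc (1 : ℤ) (N : ℤ), enorm2 (dd (ℓ + 1)) ^ 2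
      = ∑ ℓ ∈ Finset.Icc (1 : ℤ) (N : ℤ), enorm2 (dd ℓ) ^ 2 :=
    aux_sum_shift N hN1 (fun ℓ => enorm2 (dd ℓ) ^ 2) (fun ℓ => by rw [hdper ℓ])
  -- final chain
  have hss : Real.sqrt ε * Real.sqrt ε = ε := Real.mul_self_sqrt hε0.le
  have final : γ * X ^ 2 ≤ ε ^ 2 * M * (X * Y) := by
    calc γ * X ^ 2
        ≤ ε * ∑ ℓ ∈ Finset.Icc (1 : ℤ) (N : ℤ),
            ((A1 * ((bd ε w ℓ).1 * (bd ε w ℓ).1) + p1 * ((bd ε w ℓ).2 * (bd ε w ℓ).2) / F)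
              + (4 * A2 * ((bd ε w ℓ).1 * (bd ε w ℓ).1)
                + 2 * p2 * ((bd ε w ℓ).2 * (bd ε w ℓ).2) / F)) := c0
      _ = ε * (∑ ℓ ∈ Finset.Icc (1 : ℤ) (N : ℤ),
            ((A1 * ((bd ε ua ℓ).1 * (bd ε w ℓ).1) + p1 * ((bd ε ua ℓ).2 * (bd ε w ℓ).2) / F)
              + (4 * A2 * ((bd ε ua ℓ).1 * (bd ε w ℓ).1)
                + 2 * p2 * ((bd ε ua ℓ).2 * (bd ε w ℓ).2) / F))
            - ∑ ℓ ∈ Finset.Icc (1 : ℤ) (N : ℤ),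
            ((A1 * ((bd ε ua ℓ).1 * (bd ε w ℓ).1) + p1 * ((bd ε ua ℓ).2 * (bd ε w ℓ).2) / F)
              + (A2 * ((bd ε ua (ℓ + 1) + bd ε ua ℓ).1 * (bd ε w (ℓ + 1) + bd ε w ℓ).1)
                + p2 * ((bd ε ua (ℓ + 1) + bd ε ua ℓ).2 * (bd ε w (ℓ + 1) + bd ε w ℓ).2)
                  / (2 * F)))) := by rw [c1, hmain']
      _ = ε * (A2 * ∑ ℓ ∈ Finset.Icc (1 : ℤ) (N : ℤ),
            (4 * (bd ε ua ℓ).1 * (bd ε w ℓ).1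
              - ((bd ε ua (ℓ + 1)).1 + (bd ε ua ℓ).1) * ((bd ε w (ℓ + 1)).1 + (bd ε w ℓ).1))
          + p2 / (2 * F) * ∑ ℓ ∈ Finset.Icc (1 : ℤ) (N : ℤ),
            (4 * (bd ε ua ℓ).2 * (bd ε w ℓ).2
              - ((bd ε ua (ℓ + 1)).2 + (bd ε ua ℓ).2) * ((bd ε w (ℓ + 1)).2 + (bd ε w ℓ).2))) := by
          rw [c3, c4]
      _ = ε * (-(A2 * (ε ^ 2 * ∑ ℓ ∈ Finset.Icc (1 : ℤ) (N : ℤ), (dd (ℓ + 1)).1 * (bd ε w ℓ).1)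
            + p2 / (2 * F) * (ε ^ 2 * ∑ ℓ ∈ Finset.Icc (1 : ℤ) (N : ℤ),
                (dd (ℓ + 1)).2 * (bd ε w ℓ).2))) := by
          rw [c5a, c5b, c6a, c6b]; ring
      _ = ε ^ 3 * (-(∑ ℓ ∈ Finset.Icc (1 : ℤ) (N : ℤ),
            (A2 * ((dd (ℓ + 1)).1 * (bd ε w ℓ).1)
              + p2 / (2 * F) * ((dd (ℓ + 1)).2 * (bd ε w ℓ).2)))) := by
          rw [c7]; ring
      _ ≤ ε ^ 3 * ∑ ℓ ∈ Finset.Icc (1 : ℤ) (N : ℤ),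
            M * (enorm2 (dd (ℓ + 1)) * enorm2 (bd ε w ℓ)) := by
          refine mul_le_mul_of_nonneg_left c8 (by positivity)
      _ ≤ ε ^ 3 * (M * (Real.sqrt (∑ ℓ ∈ Finset.Icc (1 : ℤ) (N : ℤ), enorm2 (dd (ℓ + 1)) ^ 2)
            * Real.sqrt (∑ ℓ ∈ Finset.Icc (1 : ℤ) (N : ℤ), enorm2 (bd ε w ℓ) ^ 2))) := by
          refine mul_le_mul_of_nonneg_left c9 (by positivity)
      _ = ε ^ 2 * M * (X * Y) := by
          rw [c10, hXeq, hYeq]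
          linear_combination (-(ε ^ 2 * M
            * Real.sqrt (∑ ℓ ∈ Finset.Icc (1 : ℤ) (N : ℤ), enorm2 (bd ε w ℓ) ^ 2)
            * Real.sqrt (∑ ℓ ∈ Finset.Icc (1 : ℤ) (N : ℤ), enorm2 (dd ℓ) ^ 2))) * hss
  -- conclusion
  have hXnn : 0 ≤ X := by rw [hX]; exact nrm_nonneg N ε (bd ε w)
  have hYnn : 0 ≤ Y := by rw [hY]; exact nrm_nonneg N ε dd
  rcases hXnn.eq_or_lt with h0 | hXpos
  · rw [← h0]
    exact mul_nonneg (div_nonneg (by positivity) hγ.le) hYnn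
  · have hstep : γ * X ≤ ε ^ 2 * M * Y := by
      have h2 : γ * X * X ≤ ε ^ 2 * M * Y * X := by
        have e1 : γ * X * X = γ * X ^ 2 := by ring
        have e2 : ε ^ 2 * M * Y * X = ε ^ 2 * M * (X * Y) := by ring
        rw [e1, e2]; exact final
      exact le_of_mul_le_mul_right h2 hXpos
    rw [show ε ^ 2 * M / γ * Y = ε ^ 2 * M * Y / γ by ring, le_div_iff₀ hγ]
    rw [mul_comm]
    exact hstep

end AuxLemmas
end
end
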